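/- arXiv:0906.5213 — 7 statements merged into one kernel-verified Lean document; each statement's English description precedes it below -/
import Mathlib

section
/- If R is a commutative ring and M and N are flat Mittag-Leffler R-modules, then the tensor product M ⊗_R N is a flat Mittag-Leffler R-module. -/
open TensorProduct

/-- `M` is a Mittag-Leffler `R`-module: for every family `(N i)` of `R`-modules, the
canonical map `M ⊗[R] (∀ i, N i) → ∀ i, M ⊗[R] N i` is injective. -/
def IsMittagLeffler (R M : Type) [CommRing R] [AddCommGroup M] [Module R M] : Prop :=
  ∀ (ι : Type) (N : ι → Type) [∀ i, AddCommGroup (N i)] [∀ i, Module R (N i)],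
    Function.Injective (TensorProduct.piRightHom R R M N)

/-- If `M` and `N` are flat Mittag-Leffler modules over a commutative ring `R`,
then `M ⊗[R] N` is a flat Mittag-Leffler module. -/
theorem flat_mittagLeffler_tensor (R M N : Type) [CommRing R]
    [AddCommGroup M] [Module R M] [AddCommGroup N] [Module R N]
    (hMflat : Module.Flat R M) (hMml : IsMittagLeffler R M)
    (hNflat : Module.Flat R N) (hNml : IsMittagLeffler R N) :
    Module.Flat R (M ⊗[R] N) ∧ IsMittagLeffler R (M ⊗[R] N) := by
  refine ⟨inferInstance, ?_⟩
  intro ι P _ _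
  -- factor the map through the associator
  let g : (M ⊗[R] N) ⊗[R] (∀ i, P i) →ₗ[R] ∀ i, (M ⊗[R] N) ⊗[R] P i :=
    (LinearMap.pi fun i =>
        (TensorProduct.assoc R M N (P i)).symm.toLinearMap.comp (LinearMap.proj i)) ∘ₗ
      (TensorProduct.piRightHom R R M (fun i => N ⊗[R] P i)) ∘ₗ
      (LinearMap.lTensor M (TensorProduct.piRightHom R R N P)) ∘ₗ
      (TensorProduct.assoc R M N (∀ i, P i)).toLinearMap
  have heq : (TensorProduct.piRightHom R R (M ⊗[R] N) P) = g := by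
    apply TensorProduct.ext'
    intro x p
    induction x using TensorProduct.induction_on with
    | zero => simp
    | tmul m n =>
        ext i
        simp [g, TensorProduct.piRightHom_tmul]
    | add a b ha hb =>
        simp only [add_tmul, map_add, ha, hb]
  rw [heq]
  simp only [g, LinearMap.coe_comp]
  refine Function.Injective.comp ?_ (Function.Injective.comp (hMml _ _)
    (Function.Injective.comp ?_ (TensorProduct.assoc R M N (∀ i, P i)).injective))
  · intro a b hab
    ext i
    have := congrFun hab i
    simpa using (TensorProduct.assoc R M N (P i)).symm.injective this
  · exact Module.Flat.lTensor_preserves_injective_linearMap _ (hNml _ _)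
end

section
/- If R is a commutative ring, M is a Mittag-Leffler R-module and N is a flat Mittag-Leffler R-module, then M ⊗_R N is Mittag-Leffler. -/
open TensorProduct

/-- If `M` is Mittag-Leffler and `N` is flat Mittag-Leffler, then `M ⊗[R] N`
is Mittag-Leffler. -/
theorem mittagLeffler_tensor_flat_mittagLeffler (R M N : Type) [CommRing R]
    [AddCommGroup M] [Module R M] [AddCommGroup N] [Module R N]
    (hMml : IsMittagLeffler R M)
    (hNflat : Module.Flat R N) (hNml : IsMittagLeffler R N) :
    IsMittagLeffler R (M ⊗[R] N) := by
  intro ι P _ _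
  -- e1 : (M ⊗ N) ⊗ ∏P ≃ N ⊗ (M ⊗ ∏P)
  let e1 : (M ⊗[R] N) ⊗[R] (∀ i, P i) ≃ₗ[R] N ⊗[R] (M ⊗[R] (∀ i, P i)) :=
    (TensorProduct.congr (TensorProduct.comm R M N) (LinearEquiv.refl R _)).trans
      (TensorProduct.assoc R N M (∀ i, P i))
  let f1 : N ⊗[R] (M ⊗[R] (∀ i, P i)) →ₗ[R] N ⊗[R] (∀ i, M ⊗[R] P i) :=
    (TensorProduct.piRightHom R R M P).lTensor N
  let f2 : N ⊗[R] (∀ i, M ⊗[R] P i) →ₗ[R] ∀ i, N ⊗[R] (M ⊗[R] P i) :=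
    TensorProduct.piRightHom R R N (fun i => M ⊗[R] P i)
  let e2 : (∀ i, N ⊗[R] (M ⊗[R] P i)) ≃ₗ[R] ∀ i, (M ⊗[R] N) ⊗[R] P i :=
    LinearEquiv.piCongrRight fun i =>
      ((TensorProduct.assoc R N M (P i)).symm.trans
        (TensorProduct.congr (TensorProduct.comm R N M) (LinearEquiv.refl R _)))
  have key : (TensorProduct.piRightHom R R (M ⊗[R] N) P : _ →ₗ[R] _) =
      (e2 : _ →ₗ[R] _) ∘ₗ f2 ∘ₗ f1 ∘ₗ (e1 : _ →ₗ[R] _) := by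
    apply TensorProduct.ext
    apply TensorProduct.ext
    ext m n p i
    simp [e1, e2, f1, f2]
  have : Function.Injective (TensorProduct.piRightHom R R (M ⊗[R] N) P : _ →ₗ[R] _) := by
    rw [key]
    simp only [LinearMap.coe_comp]
    exact e2.injective.comp ((hNml ι _).comp
      (((Module.Flat.lTensor_preserves_injective_linearMap _ (hMml ι P)).comp
        e1.injective)))
  exact this
end

section
/- Every finitely presented module over a ring R is Mittag-Leffler. -/
open TensorProduct

section Aux

variable {R : Type} [CommRing R]

/-- Canonical representation of an element of `(κ → R) ⊗ P` as a sum over the standard basis. -/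
private lemma repr_tensor {κ : Type} [Fintype κ] [DecidableEq κ]
    {P : Type} [AddCommGroup P] [Module R P] (y : (κ → R) ⊗[R] P) :
    y = ∑ j : κ, Pi.single j (1 : R) ⊗ₜ[R]
      (TensorProduct.piScalarRight R R P κ ((TensorProduct.comm R (κ → R) P) y)) j := by
  set e := (TensorProduct.comm R (κ → R) P).trans
    (TensorProduct.piScalarRight R R P κ) with he
  have key : ∀ (j : κ) (p : P), e (Pi.single j (1 : R) ⊗ₜ[R] p) = Pi.single j p := by
    intro j p
    ext k
    simp [he, Pi.single_apply, TensorProduct.comm_tmul]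
  apply e.injective
  rw [map_sum]
  have : ∀ j : κ, e (Pi.single j (1 : R) ⊗ₜ[R]
      (TensorProduct.piScalarRight R R P κ ((TensorProduct.comm R (κ → R) P) y)) j)
      = Pi.single j ((e y) j) := by
    intro j
    rw [key]
    rfl
  rw [Finset.sum_congr rfl (fun j _ => this j)]
  exact (Finset.univ_sum_single (e y)).symm

private lemma piRightHom_free_injective {κ : Type} [Fintype κ] [DecidableEq κ]
    {ι : Type} (N : ι → Type) [∀ i, AddCommGroup (N i)] [∀ i, Module R (N i)] :
    Function.Injective (TensorProduct.piRightHom R R (κ → R) N) := by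
  intro y y' hyy'
  wlog hy' : y' = 0 generalizing y y'
  · have := this (y := y - y') (y' := 0) (by rw [map_sub, hyy', sub_self, map_zero]) rfl
    exact sub_eq_zero.mp this
  subst hy'
  rw [map_zero] at hyy'
  set v := fun j => (TensorProduct.piScalarRight R R (∀ i, N i) κ)
    ((TensorProduct.comm R (κ → R) (∀ i, N i)) y) j with hv
  have hrep : y = ∑ j : κ, Pi.single j (1 : R) ⊗ₜ[R] v j := repr_tensor y
  have hcomp : ∀ i : ι, (∑ j : κ, Pi.single j (1 : R) ⊗ₜ[R] (v j i) : (κ → R) ⊗[R] N i) = 0 := by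
    intro i
    have := congrFun hyy' i
    rw [hrep] at this
    rw [map_sum] at this
    simpa using this
  have hvz : ∀ j, v j = 0 := by
    intro j
    funext i
    have h0 := hcomp i
    set ei := (TensorProduct.comm R (κ → R) (N i)).trans
      (TensorProduct.piScalarRight R R (N i) κ) with hei
    have := congrArg ei h0
    rw [map_sum, map_zero] at this
    have key : ∀ (j' : κ) (p : N i), ei (Pi.single j' (1 : R) ⊗ₜ[R] p) = Pi.single j' p := by
      intro j' p
      ext k
      simp [hei, Pi.single_apply, TensorProduct.comm_tmul]
    rw [Finset.sum_congr rfl (fun j' _ => key j' (v j' i))] at this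
    rw [Finset.univ_sum_single (fun j' => v j' i)] at this
    exact congrFun this j
  rw [hrep]
  simp [hvz]

private lemma piRightHom_free_surjective {κ : Type} [Fintype κ] [DecidableEq κ]
    {ι : Type} (N : ι → Type) [∀ i, AddCommGroup (N i)] [∀ i, Module R (N i)] :
    Function.Surjective (TensorProduct.piRightHom R R (κ → R) N) := by
  intro z
  refine ⟨∑ j : κ, Pi.single j (1 : R) ⊗ₜ[R]
    (fun i => (TensorProduct.piScalarRight R R (N i) κ)
      ((TensorProduct.comm R (κ → R) (N i)) (z i)) j), ?_⟩
  rw [map_sum]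
  funext i
  rw [Finset.sum_apply]
  simp only [TensorProduct.piRightHom_tmul]
  exact (repr_tensor (z i)).symm

private lemma piRightHom_naturality {P Q : Type} [AddCommGroup P] [Module R P]
    [AddCommGroup Q] [Module R Q] (h : P →ₗ[R] Q)
    {ι : Type} (N : ι → Type) [∀ i, AddCommGroup (N i)] [∀ i, Module R (N i)]
    (y : P ⊗[R] (∀ i, N i)) :
    TensorProduct.piRightHom R R Q N (LinearMap.rTensor (∀ i, N i) h y)
      = fun i => LinearMap.rTensor (N i) h (TensorProduct.piRightHom R R P N y i) := by
  induction y with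
  | zero =>
    simp only [map_zero]
    rfl
  | tmul p f => rfl
  | add a b ha hb =>
    rw [map_add, map_add, ha, hb]
    funext i
    simp

end Aux

/-- Every finitely presented module is Mittag-Leffler. -/
theorem finitePresentation_isMittagLeffler (R M : Type) [CommRing R]
    [AddCommGroup M] [Module R M] (h : Module.FinitePresentation R M) :
    IsMittagLeffler R M := by
  intro ι N _ _
  classical
  -- get a presentation
  obtain ⟨n, π, hπ⟩ := Module.Finite.exists_fin' R M
  have hker : (LinearMap.ker π).FG := Module.FinitePresentation.fg_ker π hπ
  obtain ⟨t, ht⟩ := hker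
  set g : (↥t → R) →ₗ[R] (Fin n → R) :=
    Fintype.linearCombination R (fun j : ↥t => (j : Fin n → R)) with hg
  have hrange : LinearMap.range g = LinearMap.ker π := by
    rw [hg, Fintype.range_linearCombination, Subtype.range_coe_subtype, Finset.setOf_mem, ht]
  have hexact : Function.Exact g π := by
    rw [LinearMap.exact_iff, hrange]
  -- the diagram chase
  intro x x' hxx'
  wlog hx' : x' = 0 generalizing x x'
  · have := this (x := x - x') (x' := 0) (by rw [map_sub, hxx', sub_self, map_zero]) rfl
    exact sub_eq_zero.mp this
  subst hx'
  rw [map_zero] at hxx'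
  obtain ⟨y, hy⟩ := LinearMap.rTensor_surjective (∀ i, N i) hπ x
  have hnat := piRightHom_naturality π N y
  rw [hy, hxx'] at hnat
  -- componentwise the image lies in the kernel, hence in the range of g ⊗ 1
  have hz : ∀ i, ∃ z : (↥t → R) ⊗[R] N i,
      LinearMap.rTensor (N i) g z = TensorProduct.piRightHom R R (Fin n → R) N y i := by
    intro i
    have hex : Function.Exact (LinearMap.rTensor (N i) g) (LinearMap.rTensor (N i) π) :=
      rTensor_exact (N i) hexact hπ
    have : LinearMap.rTensor (N i) π (TensorProduct.piRightHom R R (Fin n → R) N y i) = 0 :=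
      (congrFun hnat.symm i)
    exact (hex _).mp this
  choose z hz using hz
  obtain ⟨w, hw⟩ := piRightHom_free_surjective (R := R) (κ := ↥t) N z
  have : TensorProduct.piRightHom R R (Fin n → R) N (LinearMap.rTensor (∀ i, N i) g w)
      = TensorProduct.piRightHom R R (Fin n → R) N y := by
    rw [piRightHom_naturality g N w]
    funext i
    rw [congrFun hw i, hz i]
  have hyw : LinearMap.rTensor (∀ i, N i) g w = y :=
    piRightHom_free_injective (R := R) N this
  have hπg : π ∘ₗ g = 0 := by
    apply LinearMap.ext
    intro v
    exact hexact.apply_apply_eq_zero v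
  rw [← hy, ← hyw, ← LinearMap.rTensor_comp_apply, hπg]
  simp
end

section
/- Every projective module over a ring R is Mittag-Leffler. -/
open TensorProduct

lemma piRightHom_naturality_s3 {R : Type} [CommRing R] {M M' : Type}
    [AddCommGroup M] [Module R M] [AddCommGroup M'] [Module R M']
    (f : M →ₗ[R] M') {ι : Type} (N : ι → Type) [∀ i, AddCommGroup (N i)]
    [∀ i, Module R (N i)] (x : M ⊗[R] (∀ i, N i)) (i : ι) :
    TensorProduct.piRightHom R R M' N (f.rTensor _ x) i
      = (f.rTensor (N i)) (TensorProduct.piRightHom R R M N x i) := by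
  induction x using TensorProduct.induction_on with
  | zero => simp
  | tmul m n => simp [TensorProduct.piRightHom_tmul]
  | add a b ha hb => simp [ha, hb]

lemma piRightHom_injective_free (R : Type) [CommRing R] (κ : Type)
    (ι : Type) (N : ι → Type) [∀ i, AddCommGroup (N i)] [∀ i, Module R (N i)] :
    Function.Injective (TensorProduct.piRightHom R R (κ →₀ R) N) := by
  classical
  rw [injective_iff_map_eq_zero]
  have key : ∀ (x : (κ →₀ R) ⊗[R] (∀ j, N j)) (i : ι) (k : κ),
      (TensorProduct.finsuppScalarLeft R (N i) κ (TensorProduct.piRightHom R R (κ →₀ R) N x i)) k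
        = (TensorProduct.finsuppScalarLeft R (∀ j, N j) κ x k) i := by
    intro x i k
    induction x using TensorProduct.induction_on with
    | zero => simp
    | tmul p f =>
        simp [TensorProduct.piRightHom_tmul,
          TensorProduct.finsuppScalarLeft_apply_tmul_apply]
    | add a b ha hb => simp [ha, hb]
  intro x hx
  have h0 : TensorProduct.finsuppScalarLeft R (∀ j, N j) κ x = 0 := by
    ext k i
    have := key x i k
    rw [hx] at this
    simpa using this.symm
  have := (TensorProduct.finsuppScalarLeft R (∀ j, N j) κ).injective
    (a₁ := x) (a₂ := 0) (by simpa using h0)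
  exact this

/-- Every projective module is Mittag-Leffler. -/
theorem projective_isMittagLeffler (R M : Type) [CommRing R]
    [AddCommGroup M] [Module R M] (h : Module.Projective R M) :
    IsMittagLeffler R M := by
  intro ι N _ _
  obtain ⟨s, hs⟩ := (Module.projective_def).mp h
  rw [injective_iff_map_eq_zero]
  intro x hx
  set p : (M →₀ R) →ₗ[R] M := Finsupp.linearCombination R id
  have hsx : TensorProduct.piRightHom R R (M →₀ R) N (s.rTensor _ x) = 0 := by
    funext i
    rw [piRightHom_naturality_s3 s N x i]
    rw [hx]
    simp
  have h1 : s.rTensor (∀ i, N i) x = 0 :=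
    piRightHom_injective_free R M ι N (by simpa using hsx)
  have h2 : (p.rTensor (∀ i, N i)) (s.rTensor _ x) = x := by
    rw [← LinearMap.rTensor_comp_apply]
    have : p ∘ₗ s = LinearMap.id := by
      ext m; exact hs m
    rw [this, LinearMap.rTensor_id, LinearMap.id_apply]
  rw [h1, map_zero] at h2
  exact h2.symm
end

section
/- No non-zero ℵ₁-free abelian group is cotorsion. -/
open CategoryTheory

/-- `Ext¹_ℤ(A, B)` in the category of abelian groups (`ℤ`-modules). -/
noncomputable abbrev ext1 (A B : ModuleCat ℤ) : Type :=
  ((Ext ℤ (ModuleCat ℤ) 1).obj (Opposite.op A)).obj B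

/-- An abelian group is `ℵ₁`-free if every countably generated subgroup is free. -/
def Aleph1Free (A : Type) [AddCommGroup A] [Module ℤ A] : Prop :=
  ∀ N : Submodule ℤ A, (∃ S : Set A, S.Countable ∧ Submodule.span ℤ S = N) →
    Module.Free ℤ N

/-- An abelian group is cotorsion if `Ext¹_ℤ(ℚ, A) = 0`. -/
def IsCotorsion (A : Type) [AddCommGroup A] : Prop :=
  Subsingleton (ext1 (ModuleCat.of ℤ ℚ) (ModuleCat.of ℤ A))

noncomputable section AuxQRes

open Finsupp

def vv (n : ℕ) : ℕ →₀ ℤ :=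
  Finsupp.single n 1 - ((n : ℤ) + 1) • Finsupp.single (n + 1) 1

def dd : (ℕ →₀ ℤ) →ₗ[ℤ] (ℕ →₀ ℤ) := Finsupp.linearCombination ℤ vv

def εε : (ℕ →₀ ℤ) →ₗ[ℤ] ℚ :=
  Finsupp.linearCombination ℤ (fun n => ((n.factorial : ℚ))⁻¹)

lemma dd_apply (x : ℕ →₀ ℤ) (m : ℕ) :
    dd x m = x m - m * x (m - 1) := by
  induction x using Finsupp.induction_linear with
  | zero => simp [dd]
  | add f g hf hg =>
      simp only [map_add, Finsupp.add_apply, hf, hg]; ring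
  | single n c =>
      have : dd (Finsupp.single n c) = c • vv n := by
        simp [dd, Finsupp.linearCombination_single]
      rw [this]
      simp only [vv, smul_sub, Finsupp.smul_apply, Finsupp.sub_apply,
        Finsupp.single_apply, smul_eq_mul]
      rcases m with _ | k
      · simp
      · simp only [Nat.add_sub_cancel]
        by_cases h1 : n = k + 1 <;> by_cases h2 : n = k <;>
          simp [h1, h2] <;> ring

lemma dd_injective : Function.Injective dd := by
  rw [injective_iff_map_eq_zero]
  intro x hx
  have key : ∀ m, x m = 0 := by
    intro m
    induction m with
    | zero =>
        have := dd_apply x 0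
        rw [hx] at this
        simpa using this.symm
    | succ k ih =>
        have := dd_apply x (k + 1)
        rw [hx] at this
        simp only [Finsupp.coe_zero, Pi.zero_apply, Nat.add_sub_cancel, ih] at this
        linarith [this.symm]
  ext m; exact key m

lemma εε_vv (n : ℕ) : εε (vv n) = 0 := by
  have hfac : ((n + 1).factorial : ℚ) = ((n : ℚ) + 1) * n.factorial := by
    rw [Nat.factorial_succ]; push_cast; ring
  have hne : ((n.factorial : ℚ)) ≠ 0 := by exact_mod_cast Nat.factorial_ne_zero n
  have hne2 : ((n : ℚ) + 1) ≠ 0 := by positivity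
  simp only [vv, map_sub, map_smul, εε, Finsupp.linearCombination_single, one_smul,
    zsmul_eq_mul]
  rw [hfac]
  push_cast
  rw [mul_inv]
  field_simp
  simp

lemma εε_dd (x : ℕ →₀ ℤ) : εε (dd x) = 0 := by
  induction x using Finsupp.induction_linear with
  | zero => simp
  | add f g hf hg => rw [map_add, map_add, hf, hg, add_zero]
  | single n c =>
      have : dd (Finsupp.single n c) = c • vv n := by
        simp [dd, Finsupp.linearCombination_single]
      rw [this, map_smul, εε_vv, smul_zero]

lemma εε_surjective : Function.Surjective εε := by
  intro q
  have hden : (q.den : ℕ) ∣ q.den.factorial :=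
    Nat.dvd_factorial q.pos le_rfl
  obtain ⟨k, hk⟩ := hden
  refine ⟨Finsupp.single q.den (q.num * k), ?_⟩
  have hsingle : εε (Finsupp.single q.den (q.num * k)) =
      (q.num * k : ℤ) • ((q.den.factorial : ℚ))⁻¹ := by
    rw [εε, Finsupp.linearCombination_single]
  rw [hsingle]
  have hkne : (k : ℚ) ≠ 0 := by
    have : k ≠ 0 := by rintro rfl; rw [Nat.mul_zero] at hk; exact Nat.factorial_ne_zero q.den hk
    exact_mod_cast this
  have hfk : (q.den.factorial : ℚ) = (q.den : ℚ) * k := by exact_mod_cast hk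
  rw [zsmul_eq_mul, hfk]
  push_cast
  calc (q.num:ℚ) * k * ((q.den:ℚ) * k)⁻¹ = (q.num * k) / ((q.den:ℚ) * k) := by
        rw [div_eq_mul_inv]
    _ = (q.num : ℚ) / q.den := mul_div_mul_right _ _ hkne
    _ = q := Rat.num_div_den q

/-- recursive solution coefficients -/
def bb (x : ℕ →₀ ℤ) : ℕ → ℤ
  | 0 => x 0
  | n+1 => (n+1) * bb x n + x (n+1)

lemma bb_succ (x : ℕ →₀ ℤ) (n : ℕ) :
    bb x (n+1) = (n+1) * bb x n + x (n+1) := rfl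

lemma bb_spec (x : ℕ →₀ ℤ) (n : ℕ) :
    (bb x n : ℚ) * ((n.factorial : ℚ))⁻¹ =
      ∑ k ∈ Finset.range (n+1), (x k : ℚ) * ((k.factorial : ℚ))⁻¹ := by
  induction n with
  | zero => simp [bb]
  | succ m ih =>
      rw [Finset.sum_range_succ, ← ih]
      have hfac : ((m + 1).factorial : ℚ) = ((m : ℚ) + 1) * m.factorial := by
        rw [Nat.factorial_succ]; push_cast; ring
      have h1 : ((m.factorial : ℚ)) ≠ 0 := by exact_mod_cast Nat.factorial_ne_zero m
      have h2 : ((m : ℚ) + 1) ≠ 0 := by positivity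
      rw [bb_succ, hfac]
      push_cast
      field_simp

lemma εε_eq_sum (x : ℕ →₀ ℤ) (n : ℕ) (h : ∀ k, n + 1 ≤ k → x k = 0) :
    εε x = ∑ k ∈ Finset.range (n+1), (x k : ℚ) * ((k.factorial:ℚ))⁻¹ := by
  rw [εε, Finsupp.linearCombination_apply, Finsupp.sum]
  rw [Finset.sum_subset (fun k hk => ?_) (fun k _ hk => ?_)]
  · exact Finset.sum_congr rfl (fun k _ => by rw [zsmul_eq_mul])
  · simp only [Finset.mem_range]
    by_contra hc
    exact Finsupp.mem_support_iff.1 hk (h k (by omega))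
  · rw [Finsupp.notMem_support_iff.1 hk, zero_smul]

lemma ker_εε_sub_range (x : ℕ →₀ ℤ) (hx : εε x = 0) : ∃ y, dd y = x := by
  set N := (x.support.sup id) + 1 with hN
  have hsupp : ∀ k, N ≤ k → x k = 0 := by
    intro k hk
    by_contra h
    have h1 : k ∈ x.support := Finsupp.mem_support_iff.2 h
    have h2 := Finset.le_sup (f := id) h1
    simp only [id] at h2
    omega
  have hb0 : ∀ n, N ≤ n + 1 → bb x n = 0 := by
    intro n hn
    have h1 := bb_spec x n
    have h2 := εε_eq_sum x n (fun k hk => hsupp k (le_trans hn hk))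
    rw [hx] at h2
    rw [← h2] at h1
    have hfne : ((n.factorial:ℚ))⁻¹ ≠ 0 :=
      inv_ne_zero (by exact_mod_cast Nat.factorial_ne_zero n)
    have : (bb x n : ℚ) = 0 := by
      rcases mul_eq_zero.1 h1 with h | h
      · exact h
      · exact absurd h hfne
    exact_mod_cast this
  refine ⟨Finsupp.onFinset (Finset.range N) (bb x) ?_, ?_⟩
  · intro n hn
    simp only [Finset.mem_range]
    by_contra h
    exact hn (hb0 n (by omega))
  · ext m
    rw [dd_apply]
    simp only [Finsupp.onFinset_apply]
    rcases m with _ | k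
    · norm_num; rfl
    · simp only [Nat.add_sub_cancel]
      rw [bb_succ]
      push_cast
      ring

end AuxQRes


noncomputable section CatPart

open CategoryTheory Limits ZeroObject


def QresX : ℕ → ModuleCat.{0} ℤ
  | 0 => ModuleCat.of ℤ (ℕ →₀ ℤ)
  | 1 => ModuleCat.of ℤ (ℕ →₀ ℤ)
  | _+2 => 0

def QresD : ∀ n : ℕ, QresX (n+1) ⟶ QresX n
  | 0 => ModuleCat.ofHom dd
  | _+1 => 0

def Qcomplex : ChainComplex (ModuleCat.{0} ℤ) ℕ :=
  ChainComplex.of QresX QresD (fun n => by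
    have h : QresD (n+1) = 0 := rfl
    rw [h, zero_comp])

instance QFproj : Projective (ModuleCat.of ℤ (ℕ →₀ ℤ)) :=
  (IsProjective.iff_projective _).mp inferInstance

instance Qprojective (n : ℕ) : Projective (Qcomplex.X n) := by
  rcases n with _ | _ | n
  · exact QFproj
  · exact QFproj
  · exact Projective.zero_projective

lemma Qcomplex_d10 : Qcomplex.d 1 0 = ModuleCat.ofHom dd := by
  simp [Qcomplex, ChainComplex.of]
  rfl

def Qπ : Qcomplex ⟶ (ChainComplex.single₀ (ModuleCat ℤ)).obj (ModuleCat.of ℤ ℚ) :=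
  (ChainComplex.toSingle₀Equiv _ _).symm ⟨ModuleCat.ofHom εε, by
    rw [Qcomplex_d10]
    ext x
    exact εε_dd x⟩

lemma Qπ_f0 : Qπ.f 0 = ModuleCat.ofHom εε := by
  simp [Qπ]
  rfl

lemma Qcomplex_exactAt_succ (n : ℕ) : Qcomplex.ExactAt (n + 1) := by
  rw [HomologicalComplex.exactAt_iff' _ (n + 2) (n + 1) n (by simp) (by simp)]
  match n with
  | 0 =>
    rw [ShortComplex.exact_iff_mono]
    · show Mono (Qcomplex.d 1 0)
      rw [Qcomplex_d10]
      exact (ModuleCat.mono_iff_injective (ModuleCat.ofHom dd)).2 dd_injective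
    · show Qcomplex.d 2 1 = 0
      have : Qcomplex.d 2 1 = QresD 1 := ChainComplex.of_d QresX QresD 1
      rw [this]; rfl
  | n+1 =>
    exact ShortComplex.exact_of_isZero_X₂ _ (Limits.isZero_zero _)

instance Qπ_quasiIso : QuasiIso Qπ := ⟨fun n => by
  cases n with
  | zero =>
    rw [ChainComplex.quasiIsoAt₀_iff, ShortComplex.quasiIso_iff_of_zeros']
    · have hcomp : ModuleCat.ofHom dd ≫ ModuleCat.ofHom εε = 0 := by
        apply ModuleCat.hom_ext; apply LinearMap.ext; intro x; exact εε_dd x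
      have hex : (ShortComplex.mk (ModuleCat.ofHom dd) (ModuleCat.ofHom εε) hcomp).Exact := by
        rw [ShortComplex.moduleCat_exact_iff]
        intro x hx
        exact ker_εε_sub_range x hx
      have hepi : Epi (ShortComplex.mk (ModuleCat.ofHom dd)
          (ModuleCat.ofHom εε) hcomp).g := by
        rw [ModuleCat.epi_iff_surjective]
        exact εε_surjective
      refine (ShortComplex.exact_and_epi_g_iff_of_iso ?_).2 ⟨hex, hepi⟩
      exact ShortComplex.isoMk (Iso.refl _) (Iso.refl _) (Iso.refl _)
          (by simp [Qcomplex_d10]; rfl) (by simp [Qπ_f0]; rfl)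
    all_goals rfl
  | succ n =>
    rw [quasiIsoAt_iff_exactAt' Qπ (n+1) (ChainComplex.exactAt_succ_single_obj _ _)]
    exact Qcomplex_exactAt_succ n⟩

def Qres : ProjectiveResolution (ModuleCat.of ℤ ℚ) where
  complex := Qcomplex
  π := Qπ

lemma cotorsion_solve (M : ModuleCat.{0} ℤ)
    (h : Subsingleton (ext1 (ModuleCat.of ℤ ℚ) M))
    (c : ModuleCat.of ℤ (ℕ →₀ ℤ) ⟶ M) :
    ∃ x : ModuleCat.of ℤ (ℕ →₀ ℤ) ⟶ M, ∀ z : ℕ →₀ ℤ, c z = x (dd z) := by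
  have e := Qres.isoExt (R := ℤ) 1 M
  set Y := Qres.complex.linearYonedaObj ℤ M with hY
  have hz0 : IsZero (((Ext ℤ (ModuleCat ℤ) 1).obj (Opposite.op (ModuleCat.of ℤ ℚ))).obj M) :=
    ModuleCat.isZero_of_subsingleton _
  have hz : IsZero (Y.homology 1) := IsZero.of_iso hz0 e.symm
  have hex : Y.ExactAt 1 := (HomologicalComplex.exactAt_iff_isZero_homology _ _).2 hz
  rw [HomologicalComplex.exactAt_iff' Y 0 1 2 (by simp) (by simp)] at hex
  rw [ShortComplex.moduleCat_exact_iff] at hex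
  have hc2 : ∀ u : ↑(HomologicalComplex.sc' Y 0 1 2).X₂,
      (HomologicalComplex.sc' Y 0 1 2).g u = 0 := fun u =>
    IsZero.eq_of_src (show IsZero (Qres.complex.X 2) from isZero_zero _) _ _
  obtain ⟨t, ht⟩ := hex (show ↑(HomologicalComplex.sc' Y 0 1 2).X₂ from c) (hc2 _)
  refine ⟨(show Qcomplex.X 0 ⟶ M from t), fun z => ?_⟩
  have ht2 : Qcomplex.d 1 0 ≫ (show Qcomplex.X 0 ⟶ M from t) = c := ht
  rw [← ht2, Qcomplex_d10]
  rfl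

end CatPart
set_option maxHeartbeats 1000000 in
lemma no_solution {A : Type} [AddCommGroup A]
    (hfree : Aleph1Free A) (a : A) (ha : a ≠ 0)
    (f : ℕ → A) (hrel : ∀ n : ℕ, a = f n - ((n : ℤ) + 1) • f (n + 1)) : False := by
  set N := Submodule.span ℤ (Set.range f) with hN
  haveI hNfree : Module.Free ℤ N := hfree N ⟨Set.range f, Set.countable_range f, rfl⟩
  have hfN : ∀ n, f n ∈ N := fun n => Submodule.subset_span ⟨n, rfl⟩
  have haN : a ∈ N := by
    rw [hrel 0]
    exact sub_mem (hfN 0) (Submodule.smul_mem _ _ (hfN 1))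
  set a' : N := ⟨a, haN⟩ with ha'def
  set g : ℕ → N := fun n => ⟨f n, hfN n⟩ with hgdef
  have hrel' : ∀ n : ℕ, g n = a' + ((n : ℤ) + 1) • g (n + 1) := by
    intro n
    apply Subtype.ext
    show f n = a + ((n : ℤ) + 1) • f (n + 1)
    rw [hrel n]
    abel
  -- coefficients
  set Ff : ℕ → ℤ := fun n => (n.factorial : ℤ) with hFf
  set Cf : ℕ → ℤ := fun n => ((n+1).factorial : ℤ) with hCf
  set Tf : ℕ → ℤ := fun n => 1 + ∑ k ∈ Finset.range n, Cf k with hTf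
  have hFf1 : ∀ n, 1 ≤ Ff n := fun n => by
    simp only [hFf]; exact_mod_cast Nat.one_le_iff_ne_zero.2 (Nat.factorial_ne_zero n)
  have hCF : ∀ n, Cf n = ((n : ℤ) + 1) * Ff n := fun n => by
    simp only [hCf, hFf, Nat.factorial_succ]; push_cast; ring
  have hCpos : ∀ n, 0 < Cf n := fun n => by
    rw [hCF n]; have := hFf1 n; positivity
  have hCsucc : ∀ n, Cf (n+1) = ((n : ℤ) + 2) * Cf n := fun n => by
    simp only [hCf, Nat.factorial_succ (n+1)]; push_cast; ring
  have hTsucc : ∀ n, Tf (n+1) = Tf n + Cf n := fun n => by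
    simp only [hTf, Finset.sum_range_succ]; ring
  have hTpos : ∀ n, 0 < Tf n := by
    intro n
    have : 0 ≤ ∑ k ∈ Finset.range n, Cf k :=
      Finset.sum_nonneg (fun k _ => le_of_lt (hCpos k))
    simp only [hTf]; linarith
  have hT3 : ∀ n, Tf n ≤ 3 * Ff n := by
    intro n
    induction n with
    | zero => simp [hTf, hFf]
    | succ m ih =>
        rcases m with _ | k
        · rw [hTsucc 0]
          have h1 : Tf 0 = 1 := by simp [hTf]
          have h2 : Cf 0 = 1 := by simp [hCf]
          have h3 : Ff 1 = 1 := by simp [hFf]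
          rw [h1, h2, h3]; norm_num
        · rw [hTsucc (k+1)]
          have h1 : Ff (k+2) = ((k:ℤ)+2) * Ff (k+1) := by
            simp only [hFf, Nat.factorial_succ (k+1)]; push_cast; ring
          have h2 := hCF (k+1)
          have h3 := hFf1 (k+1)
          rw [h1, h2]
          nlinarith [ih]
  -- the key telescoping identity
  have key : ∀ n, g 0 = Tf n • a' + Cf n • g (n+1) := by
    intro n
    induction n with
    | zero =>
        have h1 : Tf 0 = 1 := by simp [hTf]
        have h2 : Cf 0 = 1 := by simp [hCf]
        rw [h1, h2, one_smul, one_smul]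
        rw [hrel' 0]
        norm_num
    | succ m ih =>
        rw [ih, hrel' (m+1), hTsucc m, hCsucc m]
        push_cast
        module
  -- pick a coordinate
  have ha' : a' ≠ 0 := by
    intro h
    exact ha (by simpa [ha'def] using congrArg Subtype.val h)
  let B := Module.Free.chooseBasis ℤ N
  have hrep : B.repr a' ≠ 0 := by
    intro h
    apply ha'
    exact B.repr.injective (by simpa using h)
  obtain ⟨i, hi⟩ := Finsupp.ne_iff.1 hrep
  set φ := B.coord i with hφ
  set m := φ a' with hm'
  have hm : m ≠ 0 := by simpa [hm', hφ, Module.Basis.coord_apply] using hi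
  set t := φ (g 0) with ht'
  set u : ℕ → ℤ := fun n => φ (g (n+1)) with hu'
  have keyφ : ∀ n, t = Tf n * m + Cf n * u n := by
    intro n
    have h := congrArg φ (key n)
    simpa [ht', hm', hu', map_add, map_smul, smul_eq_mul] using h
  -- large n forces t = Tf n * m
  have solution_eq : ∀ n : ℕ, |t| + 3 * |m| ≤ (n : ℤ) → t = Tf n * m := by
    intro n hn
    have h1 : Cf n * u n = t - Tf n * m := by linarith [keyφ n]
    have habs : |t - Tf n * m| < Cf n := by
      have hb : |t - Tf n * m| ≤ |t| + Tf n * |m| := by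
        calc |t - Tf n * m| ≤ |t| + |Tf n * m| := abs_sub _ _
          _ = |t| + Tf n * |m| := by rw [abs_mul, abs_of_pos (hTpos n)]
      have hC := hCF n
      have hF := hFf1 n
      have hT := hT3 n
      have hmn : (0:ℤ) ≤ |m| := abs_nonneg m
      have htn : (0:ℤ) ≤ |t| := abs_nonneg t
      nlinarith [mul_le_mul_of_nonneg_right hT hmn, mul_le_mul_of_nonneg_right hF htn,
        mul_le_mul_of_nonneg_right hF hmn]
    have hun : u n = 0 := by
      by_contra h
      have h2 : 1 ≤ |u n| := Int.one_le_abs (by simpa using h)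
      have h3 : Cf n ≤ |Cf n * u n| := by
        rw [abs_mul, abs_of_pos (hCpos n)]
        exact le_mul_of_one_le_right (le_of_lt (hCpos n)) h2
      rw [h1] at h3
      linarith
    rw [keyφ n, hun, mul_zero, add_zero]
  set n0 : ℕ := t.natAbs + 3 * m.natAbs with hn0
  have hc0 : |t| + 3 * |m| ≤ (n0 : ℤ) := by
    simp only [hn0]
    push_cast [Int.natCast_natAbs]
    linarith
  have e1 := solution_eq n0 hc0
  have e2 := solution_eq (n0 + 1) (by push_cast; linarith)
  rw [hTsucc n0, add_mul] at e2
  have h0 : Cf n0 * m = 0 := by linarith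
  rcases mul_eq_zero.1 h0 with h | h
  · exact absurd h (ne_of_gt (hCpos n0))
  · exact hm h

/-- No nonzero `ℵ₁`-free abelian group is cotorsion. -/
theorem aleph1Free_not_cotorsion (A : Type) [AddCommGroup A]
    (hfree : Aleph1Free A) (hnz : Nontrivial A) : ¬ IsCotorsion A := by
  intro hcot
  obtain ⟨a, ha⟩ := exists_ne (0 : A)
  have hsub : Subsingleton (ext1 (ModuleCat.of ℤ ℚ) (ModuleCat.of ℤ A)) := hcot
  let c : ModuleCat.of ℤ (ℕ →₀ ℤ) ⟶ ModuleCat.of ℤ A :=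
    ModuleCat.ofHom (Finsupp.linearCombination ℤ (fun _ : ℕ => a))
  obtain ⟨x, hx⟩ := cotorsion_solve (ModuleCat.of ℤ A) hsub c
  refine no_solution hfree a ha (fun n => x (Finsupp.single n 1)) (fun n => ?_)
  have h1 := hx (Finsupp.single n 1)
  have h2 : c (Finsupp.single n 1) = a := by
    show Finsupp.linearCombination ℤ (fun _ : ℕ => a) (Finsupp.single n 1) = a
    rw [Finsupp.linearCombination_single, one_smul]
  have h3 : dd (Finsupp.single n 1) = vv n := by
    rw [dd, Finsupp.linearCombination_single, one_smul]
  rw [h2, h3] at h1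
  rw [h1, vv, map_sub, map_smul]
end

section
/- The Baer-Specker group ℤ^κ (the product of κ copies of ℤ) is ℵ₁-free for every cardinal κ. -/
open Submodule Set

variable {ι : Type}

/-- The saturation (pure closure) of a submodule of `ι → ℤ`. -/
def satur (F : Submodule ℤ (ι → ℤ)) : Submodule ℤ (ι → ℤ) where
  carrier := {y | ∃ m : ℤ, m ≠ 0 ∧ m • y ∈ F}
  zero_mem' := ⟨1, one_ne_zero, by simp⟩
  add_mem' := by
    rintro a b ⟨m, hm, hma⟩ ⟨k, hk, hkb⟩
    refine ⟨m * k, mul_ne_zero hm hk, ?_⟩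
    have : (m * k) • (a + b) = k • (m • a) + m • (k • b) := by
      rw [smul_add]; rw [smul_smul, smul_smul]; ring_nf
    rw [this]
    exact F.add_mem (F.smul_mem _ hma) (F.smul_mem _ hkb)
  smul_mem' := by
    rintro c y ⟨m, hm, hmy⟩
    exact ⟨m, hm, by rw [smul_comm]; exact F.smul_mem _ hmy⟩

lemma mem_satur {F : Submodule ℤ (ι → ℤ)} {y : ι → ℤ} :
    y ∈ satur F ↔ ∃ m : ℤ, m ≠ 0 ∧ m • y ∈ F := Iff.rfl

lemma le_satur (F : Submodule ℤ (ι → ℤ)) : F ≤ satur F :=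
  fun y hy => ⟨1, one_ne_zero, by simpa using hy⟩

lemma satur_mono {F F' : Submodule ℤ (ι → ℤ)} (h : F ≤ F') : satur F ≤ satur F' := by
  rintro y ⟨m, hm, hmy⟩; exact ⟨m, hm, h hmy⟩

lemma mem_satur_of_smul {F : Submodule ℤ (ι → ℤ)} {y : ι → ℤ} {m : ℤ} (hm : m ≠ 0)
    (h : m • y ∈ satur F) : y ∈ satur F := by
  obtain ⟨k, hk, hky⟩ := h
  exact ⟨k * m, mul_ne_zero hk hm, by rwa [mul_smul]⟩

lemma satur_bot : satur (⊥ : Submodule ℤ (ι → ℤ)) = ⊥ := by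
  refine le_antisymm ?_ (le_satur _)
  rintro y ⟨m, hm, hmy⟩
  rw [Submodule.mem_bot] at hmy ⊢
  rcases smul_eq_zero.mp hmy with h | h
  · exact absurd h hm
  · exact h

/-- Coordinatewise cast `ℤ → ℚ` as a `ℤ`-linear map. -/
def castLM (ι : Type) : (ι → ℤ) →ₗ[ℤ] (ι → ℚ) where
  toFun y i := (y i : ℚ)
  map_add' a b := by funext i; push_cast; simp
  map_smul' m a := by
    funext i
    simp [Pi.smul_apply, smul_eq_mul]

/-- A finite-dimensional subspace of `ι → ℚ` is separated by finitely many coordinates. -/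
lemma exists_separating (V : Submodule ℚ (ι → ℚ)) [FiniteDimensional ℚ V] :
    ∃ s : Finset ι, ∀ v ∈ V, (∀ i ∈ s, v i = 0) → v = 0 := by
  classical
  let K : Finset ι → Submodule ℚ V := fun s =>
    ⨅ i ∈ s, LinearMap.ker ((LinearMap.proj i : (ι → ℚ) →ₗ[ℚ] ℚ).comp V.subtype)
  have hKmem : ∀ (s : Finset ι) (v : V), v ∈ K s ↔ ∀ i ∈ s, (v : ι → ℚ) i = 0 := by
    intro s v
    simp [K, Submodule.mem_iInf, LinearMap.mem_ker]
  obtain ⟨W, ⟨s₀, rfl⟩, hmin⟩ :=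
    IsArtinian.set_has_minimal (R := ℚ) (M := V) (Set.range K) ⟨K ∅, ⟨∅, rfl⟩⟩
  refine ⟨s₀, fun v hv hvz => ?_⟩
  have hbot : K s₀ = ⊥ := by
    by_contra hne
    obtain ⟨v₀, hv₀, hv₀ne⟩ := Submodule.ne_bot_iff _ |>.mp hne
    have : (v₀ : ι → ℚ) ≠ 0 := fun h => hv₀ne (Subtype.ext h)
    obtain ⟨i, hi⟩ : ∃ i, (v₀ : ι → ℚ) i ≠ 0 := by
      by_contra h; push_neg at h; exact this (funext h)
    refine hmin (K (insert i s₀)) ⟨_, rfl⟩ (lt_of_le_of_ne ?_ ?_)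
    · intro x hx
      rw [hKmem] at hx ⊢
      exact fun j hj => hx j (Finset.mem_insert_of_mem hj)
    · intro h
      have : v₀ ∈ K (insert i s₀) := h ▸ hv₀
      rw [hKmem] at this
      exact hi (this i (Finset.mem_insert_self _ _))
  have : (⟨v, hv⟩ : V) ∈ K s₀ := (hKmem s₀ _).mpr hvz
  rw [hbot, Submodule.mem_bot] at this
  exact congrArg Subtype.val this

/-- The saturation of the span of a finite set is a finite module. -/
lemma satur_finite (T : Set (ι → ℤ)) (hT : T.Finite) :
    Module.Finite ℤ ↥(satur (span ℤ T)) := by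
  classical
  set c := castLM ι
  set V : Submodule ℚ (ι → ℚ) := span ℚ (c '' T) with hV
  have : FiniteDimensional ℚ V := FiniteDimensional.span_of_finite ℚ (hT.image _)
  obtain ⟨s, hs⟩ := exists_separating V
  -- the projection onto the coordinates in `s`
  set π : (ι → ℤ) →ₗ[ℤ] (↥s → ℤ) :=
    LinearMap.pi (fun j : ↥s => LinearMap.proj (j : ι)) with hπ
  set P := satur (span ℤ T)
  have key : ∀ y ∈ P, (∀ i ∈ s, y i = 0) → y = 0 := by
    intro y hy hy0
    obtain ⟨m, hm, hmy⟩ := hy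
    have hcy : c y ∈ V := by
      have hmap : c (m • y) ∈ V := by
        have hle : span ℤ T ≤ (V.restrictScalars ℤ).comap c := by
          rw [Submodule.span_le]
          intro t ht
          exact Submodule.subset_span ⟨t, ht, rfl⟩
        exact hle hmy
      have h1 : (m : ℚ) • c y ∈ V := by
        rw [map_smul] at hmap
        rwa [Int.cast_smul_eq_zsmul]
      have h2 : ((m : ℚ)⁻¹ * (m : ℚ)) • c y ∈ V := by
        rw [mul_smul]; exact V.smul_mem _ h1
      rwa [inv_mul_cancel₀ (by exact_mod_cast hm), one_smul] at h2
    have hc0 : c y = 0 := hs _ hcy (fun i hi => by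
      show ((y i : ℚ)) = 0
      rw [hy0 i hi]; simp)
    funext i
    have h5 := congrFun hc0 i
    rw [Pi.zero_apply] at h5
    have h6 : ((y i : ℚ)) = 0 := h5
    exact_mod_cast h6
  have hinj : Function.Injective (π.comp P.subtype) := by
    intro x x' hxx
    apply Subtype.ext
    have hmem : (x : ι → ℤ) - (x' : ι → ℤ) ∈ P := P.sub_mem x.2 x'.2
    have hsub : (x : ι → ℤ) - (x' : ι → ℤ) = 0 := by
      refine key _ hmem (fun i hi => ?_)
      have := congrFun hxx ⟨i, hi⟩
      simp only [hπ, LinearMap.coe_comp, Function.comp_apply, Submodule.coe_subtype,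
        LinearMap.pi_apply, LinearMap.proj_apply] at this
      simp [this]
    exact sub_eq_zero.mp hsub
  have : IsNoetherian ℤ (↥s → ℤ) := inferInstance
  have : IsNoetherian ℤ P := isNoetherian_of_injective _ hinj
  exact ⟨IsNoetherian.noetherian ⊤⟩

/-- A submodule contained in a finitely generated submodule of `ι → ℤ` is f.g. -/
lemma fg_of_le_fg {A P : Submodule ℤ (ι → ℤ)} (hP : P.FG) (hAP : A ≤ P) : A.FG := by
  have : IsNoetherian ℤ P := isNoetherian_of_fg_of_noetherian _ hP
  have h1 : (A.comap P.subtype).FG := IsNoetherian.noetherian _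
  have h2 : (A.comap P.subtype).map P.subtype = A := by
    rw [Submodule.map_comap_subtype, inf_eq_right.mpr hAP]
  rw [← h2]
  exact h1.map _

/-- Splitting off a free complement of a pure finitely generated submodule. -/
lemma exists_complement {B A : Submodule ℤ (ι → ℤ)} (hBA : B ≤ A) (hA : A.FG)
    (hpure : ∀ x ∈ A, ∀ m : ℤ, m ≠ 0 → m • x ∈ B → x ∈ B) :
    ∃ C : Submodule ℤ (ι → ℤ), C ≤ A ∧ B ⊔ C = A ∧ Disjoint B C ∧ Module.Free ℤ C := by
  haveI hAfin : Module.Finite ℤ A := Module.Finite.iff_fg.mpr hA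
  set B' : Submodule ℤ A := B.comap A.subtype with hB'
  set Q := A ⧸ B'
  have hmk : ∀ a : A, B'.mkQ a = 0 ↔ (a : ι → ℤ) ∈ B := by
    intro a
    rw [← LinearMap.mem_ker, Submodule.ker_mkQ]
    exact Iff.rfl
  haveI hQtf : NoZeroSMulDivisors ℤ Q := by
    refine ⟨fun {m q} h => ?_⟩
    by_cases hm : m = 0
    · exact Or.inl hm
    · refine Or.inr ?_
      obtain ⟨a, rfl⟩ := B'.mkQ_surjective q
      have h2 : B'.mkQ (m • a) = 0 := by rw [map_smul]; exact h
      have h3 : ((m • a : A) : ι → ℤ) ∈ B := (hmk _).mp h2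
      have h4 : m • (a : ι → ℤ) ∈ B := by simpa using h3
      exact (hmk a).mpr (hpure a a.2 m hm h4)
  haveI hQfin : Module.Finite ℤ Q := Module.Finite.of_surjective B'.mkQ (B'.mkQ_surjective)
  haveI hQfree : Module.Free ℤ Q := Module.free_of_finite_type_torsion_free'
  haveI hQproj : Module.Projective ℤ Q := Module.Projective.of_free
  obtain ⟨σ, hσ⟩ := Module.projective_lifting_property B'.mkQ LinearMap.id
    (B'.mkQ_surjective)
  have hσid : ∀ q : Q, B'.mkQ (σ q) = q := fun q => congrFun (congrArg DFunLike.coe hσ) q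
  set C : Submodule ℤ (ι → ℤ) := LinearMap.range (A.subtype.comp σ) with hC
  have hCA : C ≤ A := by
    rintro x ⟨q, rfl⟩
    exact (σ q).2
  have hsup : B ⊔ C = A := by
    refine le_antisymm (sup_le hBA hCA) ?_
    intro x hx
    set a : A := ⟨x, hx⟩
    have hc : ((σ (B'.mkQ a) : A) : ι → ℤ) ∈ C := ⟨B'.mkQ a, rfl⟩
    have hb : x - ((σ (B'.mkQ a) : A) : ι → ℤ) ∈ B := by
      have : B'.mkQ (a - σ (B'.mkQ a)) = 0 := by
        rw [map_sub, hσid, sub_self]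
      have := (hmk _).mp this
      simpa using this
    have : x = (x - ((σ (B'.mkQ a) : A) : ι → ℤ)) + ((σ (B'.mkQ a) : A) : ι → ℤ) := by ring
    rw [this]
    exact Submodule.add_mem_sup hb hc
  have hdisj : Disjoint B C := by
    rw [Submodule.disjoint_def]
    rintro x hxB ⟨q, rfl⟩
    have hq : σ q ∈ B' := hxB
    have hq0 : q = 0 := by
      rw [← hσid q]
      exact (Submodule.Quotient.mk_eq_zero B').mpr hq
    rw [hq0]
    simp
  have hinj : Function.Injective (A.subtype.comp σ) := by
    intro q q' h
    have : σ q = σ q' := Subtype.ext h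
    rw [← hσid q, ← hσid q', this]
  have hfree : Module.Free ℤ C := Module.Free.of_equiv (LinearEquiv.ofInjective _ hinj)
  exact ⟨C, hCA, hsup, hdisj, hfree⟩

/-- Linear independence in a graded situation. -/
lemma sum_eq_zero_lemma {C : ℕ → Submodule ℤ (ι → ℤ)}
    (h : ∀ n, Disjoint (⨆ m, ⨆ _ : m < n, C m) (C n)) :
    ∀ (t : Finset ℕ) (y : ℕ → (ι → ℤ)), (∀ j ∈ t, y j ∈ C j) → ∑ j ∈ t, y j = 0 →
      ∀ j ∈ t, y j = 0 := by
  classical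
  intro t
  induction t using Finset.induction_on_max with
  | empty => intro y _ _ j hj; exact absurd hj (Finset.notMem_empty j)
  | insert a t ha ih =>
    intro y hy hsum
    have hat : a ∉ t := fun h => lt_irrefl a (ha a h)
    rw [Finset.sum_insert hat] at hsum
    have hmem : ∑ j ∈ t, y j ∈ ⨆ m, ⨆ _ : m < a, C m :=
      Submodule.sum_mem _ fun j hj =>
        Submodule.mem_iSup_of_mem j (Submodule.mem_iSup_of_mem (ha j hj)
          (hy j (Finset.mem_insert_of_mem hj)))
    have hya0 : y a = 0 := by
      have h1 : y a ∈ ⨆ m, ⨆ _ : m < a, C m := by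
        have : y a = -∑ j ∈ t, y j := eq_neg_of_add_eq_zero_left hsum
        rw [this]
        exact Submodule.neg_mem _ hmem
      exact (Submodule.disjoint_def.mp (h a)) _ h1 (hy a (Finset.mem_insert_self a t))
    have hsum' : ∑ j ∈ t, y j = 0 := by rwa [hya0, zero_add] at hsum
    intro j hj
    rcases Finset.mem_insert.mp hj with rfl | hj
    · exact hya0
    · exact ih y (fun k hk => hy k (Finset.mem_insert_of_mem hk)) hsum' j hj


/-- The Baer-Specker group `ℤ^κ` is `ℵ₁`-free for every cardinal `κ` (i.e. for every
index type `ι`). -/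
theorem baerSpecker_aleph1Free : ∀ ι : Type, Aleph1Free (ι → ℤ) := by
  classical
  rintro ι N ⟨S, hS, hspan⟩
  -- enumerate a generating sequence
  obtain ⟨f, hf⟩ := (hS.insert 0).exists_eq_range (insert_nonempty 0 S)
  have hspan' : span ℤ (Set.range f) = N := by
    rw [← hf, Submodule.span_insert_zero, hspan]
  have hfN : ∀ k, f k ∈ N := by
    intro k
    rw [← hspan']
    exact Submodule.subset_span ⟨k, rfl⟩
  -- the filtration
  set F : ℕ → Submodule ℤ (ι → ℤ) := fun n => span ℤ (f '' {m | m < n}) with hF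
  set P : ℕ → Submodule ℤ (ι → ℤ) := fun n => satur (F n) with hP
  set G : ℕ → Submodule ℤ (ι → ℤ) := fun n => N ⊓ P n with hG
  have hFmono : Monotone F := fun a b hab =>
    Submodule.span_mono (Set.image_mono (fun m hm => lt_of_lt_of_le hm hab))
  have hGmono : Monotone G := fun a b hab => inf_le_inf le_rfl (satur_mono (hFmono hab))
  have hPfin : ∀ n, (P n).FG := by
    intro n
    rw [← Module.Finite.iff_fg]
    exact satur_finite _ (((Set.finite_Iio n).image f))
  have hGfg : ∀ n, (G n).FG := fun n => fg_of_le_fg (hPfin n) inf_le_right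
  have hG0 : G 0 = ⊥ := by
    have : F 0 = ⊥ := by
      rw [hF]
      convert Submodule.span_empty
      simp
    rw [hG]
    simp only [hP, this, satur_bot, inf_bot_eq]
  have hGN : ⨆ n, G n = N := by
    apply le_antisymm
    · exact iSup_le fun n => inf_le_left
    · rw [← hspan']
      rw [Submodule.span_le]
      rintro x ⟨k, rfl⟩
      have : f k ∈ G (k + 1) := by
        refine ⟨hfN k, le_satur _ ?_⟩
        exact Submodule.subset_span ⟨k, Nat.lt_succ_self k, rfl⟩
      exact Submodule.mem_iSup_of_mem (k + 1) this
  -- purity of each `G n` inside `N`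
  have hpure : ∀ n, ∀ x ∈ N, ∀ m : ℤ, m ≠ 0 → m • x ∈ G n → x ∈ G n := by
    intro n x hx m hm hmx
    exact ⟨hx, mem_satur_of_smul hm hmx.2⟩
  -- choose the complements
  have hstep : ∀ n, ∃ C : Submodule ℤ (ι → ℤ),
      C ≤ G (n + 1) ∧ G n ⊔ C = G (n + 1) ∧ Disjoint (G n) C ∧ Module.Free ℤ C := by
    intro n
    exact exists_complement (hGmono (Nat.le_succ n)) (hGfg (n + 1))
      (fun x hx m hm hmx => hpure n x ((inf_le_left : G (n+1) ≤ N) hx) m hm hmx)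
  choose C hCle hCsup hCdisj hCfree using hstep
  -- partial sups of the `C n` are the `G n`
  have hCsups : ∀ n, (⨆ m, ⨆ _ : m < n, C m) = G n := by
    intro n
    induction n with
    | zero =>
      rw [hG0]
      simp
    | succ n ih =>
      rw [← hCsup n, ← ih]
      apply le_antisymm
      · apply iSup_le; intro m; apply iSup_le; intro hm
        rcases Nat.lt_succ_iff_lt_or_eq.mp hm with hm' | rfl
        · exact le_sup_of_le_left (le_iSup_of_le m (le_iSup_of_le hm' le_rfl))
        · exact le_sup_right
      · apply sup_le
        · apply iSup_le; intro m; apply iSup_le; intro hm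
          exact le_iSup_of_le m (le_iSup_of_le (Nat.lt_succ_of_lt hm) le_rfl)
        · exact le_iSup_of_le n (le_iSup_of_le (Nat.lt_succ_self n) le_rfl)
  have hCdisj' : ∀ n, Disjoint (⨆ m, ⨆ _ : m < n, C m) (C n) := by
    intro n; rw [hCsups n]; exact hCdisj n
  -- the `C n` span `N`
  have hCN : ∀ n, C n ≤ N := fun n => (hCle n).trans inf_le_left
  have hCiSup : ⨆ n, C n = N := by
    apply le_antisymm (iSup_le hCN)
    rw [← hGN]
    apply iSup_le
    intro n
    rw [← hCsups n]
    apply iSup_le; intro m; apply iSup_le; intro hm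
    exact le_iSup_of_le m le_rfl
  -- independence of the `C n`
  have hindep : iSupIndep C := by
    intro i
    rw [Submodule.disjoint_def]
    intro x hxi hxsup
    rw [Submodule.mem_iSup_iff_exists_finsupp] at hxsup
    obtain ⟨g, hg, hgsum⟩ := hxsup
    set t : Finset ℕ := insert i g.support with ht
    set y : ℕ → (ι → ℤ) := fun j => if j = i then g i - x else g j with hy
    have hgC : ∀ j, j ≠ i → g j ∈ C j := by
      intro j hj
      have := hg j
      rw [iSup_pos hj] at this
      exact this
    have hgi : g i = 0 := by
      have h0 := hg i
      rw [iSup_neg (by simp : ¬ i ≠ i)] at h0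
      simpa using h0
    have hyi : y i = g i - x := by simp [hy]
    have hyC : ∀ j ∈ t, y j ∈ C j := by
      intro j hj
      by_cases hji : j = i
      · subst hji
        have : y j = -x := by rw [hyi, hgi, zero_sub]
        rw [this]
        exact (C j).neg_mem hxi
      · have : y j = g j := by simp [hy, hji]
        rw [this]
        exact hgC j hji
    have hysum : ∑ j ∈ t, y j = 0 := by
      have hsum : ∑ j ∈ t, g j = x := by
        rw [← hgsum, Finsupp.sum]
        exact (Finset.sum_subset (Finset.subset_insert i g.support)
          (fun j _ hj => Finsupp.notMem_support_iff.mp hj)).symm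
      have hit : i ∈ t := Finset.mem_insert_self i _
      have h1 : ∑ j ∈ t.erase i, y j = ∑ j ∈ t.erase i, g j :=
        Finset.sum_congr rfl (fun j hj => by
          simp [hy, Finset.ne_of_mem_erase hj])
      rw [← Finset.add_sum_erase t y hit, ← Finset.add_sum_erase t g hit, h1, hyi] at *
      rw [← hsum]
      abel
    have h4 := sum_eq_zero_lemma hCdisj' t y hyC hysum i (Finset.mem_insert_self i _)
    rw [hyi, hgi, zero_sub, neg_eq_zero] at h4
    exact h4
  -- transfer to submodules of `N`
  set C' : ℕ → Submodule ℤ N := fun n => (C n).comap N.subtype with hC'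
  have hmapC' : ∀ n, (C' n).map N.subtype = C n := by
    intro n
    rw [hC']
    rw [Submodule.map_comap_subtype, inf_eq_right.mpr (hCN n)]
  have hC'top : ⨆ n, C' n = ⊤ := by
    apply Submodule.map_injective_of_injective N.injective_subtype
    rw [Submodule.map_iSup]
    simp only [hmapC']
    rw [hCiSup, Submodule.map_top, Submodule.range_subtype]
  have hC'indep : iSupIndep C' := by
    intro i
    rw [Submodule.disjoint_def]
    intro x hxi hxsup
    have h1 : (x : ι → ℤ) ∈ C i := hxi
    have h2 : (x : ι → ℤ) ∈ ⨆ j, ⨆ _ : j ≠ i, C j := by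
      have : N.subtype x ∈ (⨆ j, ⨆ _ : j ≠ i, C' j).map N.subtype :=
        Submodule.mem_map_of_mem hxsup
      rw [Submodule.map_iSup] at this
      refine (iSup_mono fun j => ?_ : _ ≤ ⨆ j, ⨆ _ : j ≠ i, C j) this
      rw [Submodule.map_iSup]
      exact iSup_mono fun hj => (hmapC' j).le
    have := Submodule.disjoint_def.mp (hindep i) _ h1 h2
    exact Subtype.ext this
  have hinternal : DirectSum.IsInternal C' :=
    DirectSum.isInternal_submodule_of_iSupIndep_of_iSup_eq_top hC'indep hC'top
  have hC'free : ∀ n, Module.Free ℤ (C' n) := by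
    intro n
    have e : (C' n) ≃ₗ[ℤ] C n := Submodule.comapSubtypeEquivOfLe (hCN n)
    haveI := hCfree n
    exact Module.Free.of_equiv e.symm
  haveI := hC'free
  let b : ∀ n, Module.Basis (Module.Free.ChooseBasisIndex ℤ (C' n)) ℤ (C' n) :=
    fun n => Module.Free.chooseBasis ℤ (C' n)
  exact Module.Free.of_basis (hinternal.collectedBasis b)
end

section
/- The class D of all flat Mittag-Leffler abelian groups (equivalently, ℵ₁-free abelian groups) is not precovering: there exists an abelian group (namely ℚ) that admits no D-precover. -/
noncomputable section A1FSetup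
open Classical

namespace A1F

/-- ℤ-linear map from additive hom, for arbitrary `Module ℤ` instances. -/
def addHomToLin {X Y : Type} [AddCommGroup X] [AddCommGroup Y] [Module ℤ X] [Module ℤ Y]
    (φ : X →+ Y) : X →ₗ[ℤ] Y where
  toFun := φ
  map_add' := φ.map_add
  map_smul' := by
    intro c x
    simp only [RingHom.id_apply]
    have h1 := Int.cast_smul_eq_zsmul ℤ c x
    have h2 := Int.cast_smul_eq_zsmul ℤ c (φ x)
    rw [Int.cast_id] at h1 h2
    try rw [h1, h2]
    exact map_zsmul φ c x

@[simp] lemma addHomToLin_apply {X Y : Type} [AddCommGroup X] [AddCommGroup Y] [Module ℤ X]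
    [Module ℤ Y] (φ : X →+ Y) (x : X) : addHomToLin φ x = φ x := rfl

/-- `r n k = k!/n!`. -/
def r (n k : ℕ) : ℕ := k.factorial / n.factorial

lemma r_mul (n k : ℕ) (h : n ≤ k) : r n k * n.factorial = k.factorial :=
  Nat.div_mul_cancel (Nat.factorial_dvd_factorial h)

lemma r_self (n : ℕ) : r n n = 1 := Nat.div_self (Nat.factorial_pos n)

lemma r_zero (k : ℕ) : r 0 k = k.factorial := by simp [r]

lemma r_succ (n k : ℕ) (h : n ≤ k) : r n k * (k+1) = r n (k+1) := by
  have h1 := r_mul n k h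
  have h2 := r_mul n (k+1) (h.trans (Nat.le_succ k))
  have : (r n k * (k+1)) * n.factorial = r n (k+1) * n.factorial := by
    rw [h2, mul_right_comm, h1, Nat.factorial_succ, mul_comm]
  exact Nat.eq_of_mul_eq_mul_right (Nat.factorial_pos n) this

lemma r_step (k L : ℕ) (h : k < L) : (k+1) * r (k+1) L = r k L := by
  have h1 := r_mul (k+1) L h
  have h2 := r_mul k L (le_of_lt h)
  have : ((k+1) * r (k+1) L) * k.factorial = r k L * k.factorial := by
    calc ((k+1) * r (k+1) L) * k.factorial = r (k+1) L * (k+1).factorial := by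
          rw [Nat.factorial_succ]; ring
      _ = L.factorial := h1
      _ = r k L * k.factorial := h2.symm
  exact Nat.eq_of_mul_eq_mul_right (Nat.factorial_pos k) this

lemma r_cast_div (n k : ℕ) (h : n ≤ k) : ((r n k : ℚ)) = (k.factorial : ℚ) / n.factorial := by
  rw [r, Nat.cast_div (Nat.factorial_dvd_factorial h) (by exact_mod_cast (Nat.factorial_pos n).ne')]

section TreeModule

set_option linter.unusedSectionVars false

variable {B : Type} [AddCommGroup B]

/-- The node of the tree `List B` given by the first `k` values of a branch. -/
def node (ν : ℕ → B) (k : ℕ) : List B := List.ofFn (fun i : Fin k => ν i)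

@[simp] lemma node_length (ν : ℕ → B) (k : ℕ) : (node ν k).length = k := by
  simp [node]

lemma node_zero (ν : ℕ → B) : node ν 0 = [] := by simp [node]

lemma node_succ (ν : ℕ → B) (k : ℕ) : node ν (k+1) = node ν k ++ [ν k] := by
  rw [node, List.ofFn_succ']
  simp [node, List.concat_eq_append]

lemma node_inj_iff {ν μ : ℕ → B} {k : ℕ} : node ν k = node μ k ↔ ∀ i < k, ν i = μ i := by
  constructor
  · intro h i hi
    have := List.ofFn_inj.mp h
    exact congrFun this ⟨i, hi⟩
  · intro h
    unfold node
    congr 1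
    ext i
    exact h i i.2

lemma eq_node_length {t : List B} {ν : ℕ → B} {k : ℕ} (h : t = node ν k) : t.length = k := by
  rw [h, node_length]

lemma eq_node_self {t : List B} {ν : ℕ → B} {k : ℕ} (h : t = node ν k) :
    t = node ν t.length := by
  rw [eq_node_length h]; exact h

/-- the branch extending a node by zeros -/
def extb (t : List B) : ℕ → B := fun i => t.getD i 0

lemma node_extb (t : List B) : node (extb t) t.length = t := by
  apply List.ext_getElem (by simp)
  intro i h1 h2
  simp only [node, extb, List.getElem_ofFn]
  rw [List.getD_eq_getElem t 0 h2]

/-- The big ambient module: functions from the tree to `ℤ`. -/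
abbrev MM (B : Type) := List B → ℤ

/-- branch-tail generators -/
def yy (ν : ℕ → B) (n : ℕ) : MM B := fun t =>
  if t = node ν t.length ∧ n ≤ t.length then (r n t.length : ℤ) else 0

/-- node generators -/
def ee (t : List B) : MM B := fun s => if s = t then 1 else 0

lemma yy_at_node (ν : ℕ → B) (n j : ℕ) :
    yy ν n (node ν j) = if n ≤ j then (r n j : ℤ) else 0 := by
  unfold yy
  by_cases h : n ≤ j <;> simp [h]

/-- T0 : the basic relation. -/
lemma yy_rel (ν : ℕ → B) (k : ℕ) :
    yy ν k = ee (node ν k) + (k+1) • yy ν (k+1) := by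
  funext t
  simp only [Pi.add_apply, Pi.smul_apply]
  unfold yy ee
  by_cases ht : t = node ν t.length
  · by_cases hL : t.length = k
    · have htk : t = node ν k := by rw [← hL]; exact ht
      rw [if_pos ⟨ht, by omega⟩, if_pos htk,
        if_neg (fun h : t = node ν t.length ∧ k+1 ≤ t.length => absurd h.2 (by omega)), hL, r_self]
      simp
    · by_cases hlt : k ≤ t.length
      · have hklt : k < t.length := by omega
        have hne' : ¬ (t = node ν k) := fun h => hL (eq_node_length h)
        rw [if_pos ⟨ht, hlt⟩, if_neg hne', if_pos ⟨ht, by omega⟩, zero_add, nsmul_eq_mul]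
        exact_mod_cast (r_step k t.length hklt).symm
      · rw [if_neg (fun h : t = node ν t.length ∧ k ≤ t.length => absurd h.2 (by omega)),
          if_neg (fun h : t = node ν k => absurd (eq_node_length h) (by omega)),
          if_neg (fun h : t = node ν t.length ∧ k+1 ≤ t.length => absurd h.2 (by omega))]
        simp
  · rw [if_neg (fun h : t = node ν t.length ∧ k ≤ t.length => ht h.1),
      if_neg (fun h : t = node ν k => ht (eq_node_self h)),
      if_neg (fun h : t = node ν t.length ∧ k+1 ≤ t.length => ht h.1)]
    simp

/-- T1 : telescoping. -/
lemma yy_telescope (ν : ℕ → B) (n k : ℕ) (h : n ≤ k) :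
    yy ν n = (∑ j ∈ Finset.Ico n k, r n j • ee (node ν j)) + r n k • yy ν k := by
  induction k with
  | zero =>
    have : n = 0 := by omega
    subst this
    simp [r_self]
  | succ k ih =>
    by_cases hnk : n ≤ k
    · rw [ih hnk, Finset.sum_Ico_succ_top hnk]
      rw [yy_rel ν k]
      rw [smul_add, smul_smul, add_assoc, r_succ n k hnk]
    · have : n = k + 1 := by omega
      subst this
      simp [r_self]

/-- main instance of telescoping -/
lemma yy_telescope0 (ν : ℕ → B) (n : ℕ) :
    yy ν 0 = (∑ j ∈ Finset.range n, j.factorial • ee (node ν j)) + n.factorial • yy ν n := by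
  have := yy_telescope ν 0 n (Nat.zero_le n)
  rw [this, r_zero]
  congr 1
  rw [Finset.range_eq_Ico]
  apply Finset.sum_congr rfl
  intro j _
  rw [r_zero]


/-- generating family of the tree module -/
def Yf (B : Type) [AddCommGroup B] : (ℕ → B) × ℕ → MM B := fun p => yy p.1 p.2

/-- the tree module -/
def LL (B : Type) [AddCommGroup B] : Submodule ℤ (MM B) :=
  Submodule.span ℤ (Set.range (Yf B))

lemma yy_mem (ν : ℕ → B) (n : ℕ) : yy ν n ∈ LL B :=
  Submodule.subset_span ⟨(ν, n), rfl⟩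

lemma ee_eq_sub (t : List B) :
    ee t = yy (extb t) t.length - (t.length + 1) • yy (extb t) (t.length + 1) := by
  have h := yy_rel (extb t) t.length
  rw [node_extb] at h
  rw [h]; abel

lemma ee_mem (t : List B) : ee t ∈ LL B := by
  rw [ee_eq_sub]
  refine sub_mem (yy_mem _ _) ?_
  rw [← natCast_zsmul]
  exact Submodule.smul_mem _ _ (yy_mem _ _)

end TreeModule

section GtSection

set_option linter.unusedSectionVars false

variable {B : Type} [AddCommGroup B]

/-- The tree module as a type (type synonym to pin the `ℤ`-module structure). -/
def Gt (B : Type) [AddCommGroup B] : Type := ↥(LL B)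

instance : AddCommGroup (Gt B) := inferInstanceAs (AddCommGroup ↥(LL B))

/-- inclusion into the ambient module -/
def toAmb (B : Type) [AddCommGroup B] : Gt B →+ MM B where
  toFun x := (show ↥(LL B) from x).1
  map_zero' := rfl
  map_add' _ _ := rfl

lemma toAmb_injective : Function.Injective (toAmb B) := by
  intro x y h
  exact Subtype.ext h

lemma toAmb_mem (x : Gt B) : toAmb B x ∈ LL B := (show ↥(LL B) from x).2

/-- branch generators as elements -/
def Ye (ν : ℕ → B) (n : ℕ) : Gt B := show ↥(LL B) from ⟨yy ν n, yy_mem ν n⟩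

/-- node generators as elements -/
def Ee (t : List B) : Gt B := show ↥(LL B) from ⟨ee t, ee_mem t⟩

@[simp] lemma toAmb_Ye (ν : ℕ → B) (n : ℕ) : toAmb B (Ye ν n) = yy ν n := rfl
@[simp] lemma toAmb_Ee (t : List B) : toAmb B (Ee t) = ee t := rfl

/-- telescoping at the level of `Gt` -/
lemma Ye_telescope0 (ν : ℕ → B) (n : ℕ) :
    Ye ν 0 = (∑ j ∈ Finset.range n, j.factorial • Ee (node ν j)) + n.factorial • Ye ν n := by
  apply toAmb_injective
  rw [map_add, map_sum, map_nsmul, toAmb_Ye, toAmb_Ye]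
  have : ∀ j ∈ Finset.range n, toAmb B (j.factorial • Ee (node ν j))
      = j.factorial • ee (node ν j) := by
    intro j _
    rw [map_nsmul, toAmb_Ee]
  rw [Finset.sum_congr rfl this]
  exact yy_telescope0 ν n

end GtSection

section Functional

set_option linter.unusedSectionVars false

/-- eventual-constancy of a rational sequence -/
def evq (u : ℕ → ℚ) : Prop := ∃ q, ∀ᶠ n in Filter.atTop, u n = q

/-- the eventual value -/
noncomputable def evVal (u : ℕ → ℚ) : ℚ := if h : evq u then h.choose else 0

lemma evVal_eq {u : ℕ → ℚ} {q : ℚ} (h : ∀ᶠ n in Filter.atTop, u n = q) : evVal u = q := by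
  have hq : evq u := ⟨q, h⟩
  rw [evVal, dif_pos hq]
  obtain ⟨n, hn⟩ := (hq.choose_spec.and h).exists
  rw [← hn.1, hn.2]

lemma evVal_spec {u : ℕ → ℚ} (h : evq u) : ∀ᶠ n in Filter.atTop, u n = evVal u := by
  obtain ⟨q, hq⟩ := h
  rw [evVal_eq hq]; exact hq

variable {B : Type} [AddCommGroup B]

/-- the sequence whose eventual value computes the branch coefficient -/
def seqv (x : MM B) (ν : ℕ → B) : ℕ → ℚ := fun n => (x (node ν n) : ℚ) / (n.factorial : ℚ)

/-- the branch coefficient functional -/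
noncomputable def Phi (ν : ℕ → B) (x : MM B) : ℚ := evVal (seqv x ν)

lemma seqv_add (x y : MM B) (ν : ℕ → B) (n : ℕ) :
    seqv (x + y) ν n = seqv x ν n + seqv y ν n := by
  simp only [seqv, Pi.add_apply]
  push_cast
  rw [add_div]

lemma seqv_smul (c : ℤ) (x : MM B) (ν : ℕ → B) (n : ℕ) :
    seqv (c • x) ν n = (c : ℚ) * seqv x ν n := by
  simp only [seqv, Pi.smul_apply, smul_eq_mul]
  push_cast
  rw [mul_div_assoc]

lemma seqv_zero (ν : ℕ → B) (n : ℕ) : seqv (0 : MM B) ν n = 0 := by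
  simp [seqv]

lemma Phi_zero (ν : ℕ → B) : Phi ν (0 : MM B) = 0 :=
  evVal_eq (Filter.Eventually.of_forall fun n => seqv_zero ν n)

lemma Phi_add {x y : MM B} (hx : ∀ ν, evq (seqv x ν)) (hy : ∀ ν, evq (seqv y ν)) (ν : ℕ → B) :
    Phi ν (x + y) = Phi ν x + Phi ν y := by
  refine evVal_eq (((evVal_spec (hx ν)).and (evVal_spec (hy ν))).mono (fun n hn => ?_))
  rw [seqv_add, hn.1, hn.2]; rfl

lemma Phi_smul {x : MM B} (hx : ∀ ν, evq (seqv x ν)) (c : ℤ) (ν : ℕ → B) :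
    Phi ν (c • x) = c * Phi ν x := by
  refine evVal_eq ((evVal_spec (hx ν)).mono (fun n hn => ?_))
  rw [seqv_smul, hn]; rfl

lemma evq_add {x y : MM B} (hx : evq (seqv x ν)) (hy : evq (seqv y ν)) :
    evq (seqv (x + y) ν) := by
  obtain ⟨qx, hqx⟩ := hx
  obtain ⟨qy, hqy⟩ := hy
  exact ⟨qx + qy, (hqx.and hqy).mono fun n hn => by rw [seqv_add, hn.1, hn.2]⟩

lemma evq_smul {x : MM B} (c : ℤ) (hx : evq (seqv x ν)) : evq (seqv (c • x) ν) := by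
  obtain ⟨qx, hqx⟩ := hx
  exact ⟨c * qx, hqx.mono fun n hn => by rw [seqv_smul, hn]⟩

/-- the good submodule -/
def Good (B : Type) [AddCommGroup B] : Submodule ℤ (MM B) where
  carrier := {x | (∀ ν, evq (seqv x ν)) ∧ ({ν : ℕ → B | Phi ν x ≠ 0}).Finite}
  add_mem' := by
    rintro x y ⟨hx1, hx2⟩ ⟨hy1, hy2⟩
    refine ⟨fun ν => evq_add (hx1 ν) (hy1 ν), (hx2.union hy2).subset ?_⟩
    intro ν hν
    by_contra hc
    simp only [Set.mem_union, Set.mem_setOf_eq, not_or, not_not] at hc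
    exact hν (by rw [Phi_add hx1 hy1, hc.1, hc.2, add_zero])
  zero_mem' := by
    refine ⟨fun ν => ⟨0, Filter.Eventually.of_forall fun n => seqv_zero ν n⟩, ?_⟩
    refine Set.Finite.subset (Set.finite_empty) ?_
    intro ν hν
    exact absurd (Phi_zero ν) hν
  smul_mem' := by
    rintro c x ⟨hx1, hx2⟩
    refine ⟨fun ν => evq_smul c (hx1 ν), hx2.subset ?_⟩
    intro ν hν
    simp only [Set.mem_setOf_eq] at hν ⊢
    intro h
    exact hν (by rw [Phi_smul hx1, h, mul_zero])

lemma seqv_yy_self_eventually (ν : ℕ → B) (n : ℕ) :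
    ∀ᶠ m in Filter.atTop, seqv (yy ν n) ν m = 1 / (n.factorial : ℚ) := by
  rw [Filter.eventually_atTop]
  refine ⟨n, fun m hm => ?_⟩
  have hfm : ((m.factorial : ℚ)) ≠ 0 := by exact_mod_cast (Nat.factorial_pos m).ne'
  simp only [seqv, yy_at_node, if_pos hm]
  push_cast
  rw [r_cast_div n m hm, div_div, mul_comm, ← div_div, div_self hfm]

lemma seqv_yy_ne_eventually {μ ν : ℕ → B} (h : μ ≠ ν) (n : ℕ) :
    ∀ᶠ m in Filter.atTop, seqv (yy ν n) μ m = 0 := by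
  obtain ⟨d, hd⟩ : ∃ d, μ d ≠ ν d := Function.ne_iff.mp h
  rw [Filter.eventually_atTop]
  refine ⟨d + 1, fun m hm => ?_⟩
  have hz : yy ν n (node μ m) = 0 := by
    unfold yy
    rw [if_neg]
    rintro ⟨h1, -⟩
    rw [node_length] at h1
    have := node_inj_iff.mp h1
    exact hd (this d (by omega))
  simp [seqv, hz]

lemma Phi_yy_self (ν : ℕ → B) (n : ℕ) : Phi ν (yy ν n) = 1 / (n.factorial : ℚ) :=
  evVal_eq (seqv_yy_self_eventually ν n)

lemma Phi_yy_ne {μ ν : ℕ → B} (h : μ ≠ ν) (n : ℕ) : Phi μ (yy ν n) = 0 :=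
  evVal_eq (seqv_yy_ne_eventually h n)

lemma yy_mem_Good (ν : ℕ → B) (n : ℕ) : yy ν n ∈ Good B := by
  refine ⟨fun μ => ?_, ?_⟩
  · by_cases h : μ = ν
    · subst h
      exact ⟨1 / (n.factorial : ℚ), seqv_yy_self_eventually μ n⟩
    · exact ⟨0, seqv_yy_ne_eventually h n⟩
  · refine Set.Finite.subset (Set.finite_singleton ν) ?_
    intro μ hμ
    by_contra hc
    simp only [Set.mem_singleton_iff] at hc
    exact hμ (Phi_yy_ne hc n)

lemma LL_le_Good : LL B ≤ Good B := by
  rw [LL, Submodule.span_le]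
  rintro x ⟨⟨ν, n⟩, rfl⟩
  exact yy_mem_Good ν n

lemma mem_Good_of_Gt (x : Gt B) : (∀ ν, evq (seqv (toAmb B x) ν)) ∧
    ({ν : ℕ → B | Phi ν (toAmb B x) ≠ 0}).Finite :=
  LL_le_Good (toAmb_mem x)

/-- The test map `g`, from weights `c` on branches. -/
noncomputable def gHom (c : (ℕ → B) → ℚ) : Gt B →+ ℚ where
  toFun x := ∑ᶠ ν, c ν * Phi ν (toAmb B x)
  map_zero' := by
    show (∑ᶠ ν, c ν * Phi ν (toAmb B 0)) = 0
    rw [(toAmb B).map_zero]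
    apply finsum_eq_zero_of_forall_eq_zero
    intro ν
    rw [Phi_zero, mul_zero]
  map_add' x y := by
    show (∑ᶠ ν, c ν * Phi ν (toAmb B (x + y)))
      = (∑ᶠ ν, c ν * Phi ν (toAmb B x)) + (∑ᶠ ν, c ν * Phi ν (toAmb B y))
    rw [(toAmb B).map_add]
    have hx := mem_Good_of_Gt x
    have hy := mem_Good_of_Gt y
    have heq : ∀ ν, c ν * Phi ν (toAmb B x + toAmb B y)
        = c ν * Phi ν (toAmb B x) + c ν * Phi ν (toAmb B y) := by
      intro ν
      rw [Phi_add hx.1 hy.1, mul_add]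
    rw [finsum_congr heq]
    apply finsum_add_distrib
    · refine hx.2.subset (fun ν hν => ?_)
      simp only [Function.mem_support] at hν
      simp only [Set.mem_setOf_eq]
      intro h
      exact hν (by rw [h, mul_zero])
    · refine hy.2.subset (fun ν hν => ?_)
      simp only [Function.mem_support] at hν
      simp only [Set.mem_setOf_eq]
      intro h
      exact hν (by rw [h, mul_zero])

lemma gHom_Ye (c : (ℕ → B) → ℚ) (ν : ℕ → B) : gHom c (Ye ν 0) = c ν := by
  show (∑ᶠ μ, c μ * Phi μ (toAmb B (Ye ν 0))) = c ν
  rw [toAmb_Ye]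
  rw [finsum_eq_single _ ν (fun μ hμ => by rw [Phi_yy_ne hμ 0, mul_zero])]
  rw [Phi_yy_self]
  simp

end Functional


section Diagonal

set_option linter.unusedSectionVars false

variable {B : Type} [AddCommGroup B]

lemma factorial_dvd_eq_zero {z : ℤ} (h : ∀ n : ℕ, ((n.factorial : ℤ)) ∣ z) : z = 0 := by
  by_contra hz
  have h1 := h (z.natAbs + 1)
  have h2 : (z.natAbs + 1).factorial ∣ z.natAbs := by
    rwa [Int.natCast_dvd] at h1
  have h3 := Nat.le_of_dvd (Int.natAbs_pos.mpr hz) h2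
  have h4 := Nat.self_le_factorial (z.natAbs + 1)
  omega

/-- separation: in an `ℵ₁`-free group, only `0` is divisible by every `n!`. -/
lemma sep_of_aleph1Free (hB : Aleph1Free B) (b : B)
    (hb : ∀ n : ℕ, ∃ z : B, b = ((n.factorial : ℤ)) • z) : b = 0 := by
  choose z hz using hb
  have hSc : ({b} ∪ Set.range z : Set B).Countable :=
    (Set.countable_singleton b).union (Set.countable_range z)
  have hfree := hB (Submodule.span ℤ ({b} ∪ Set.range z)) ⟨_, hSc, rfl⟩
  set N := Submodule.span ℤ ({b} ∪ Set.range z : Set B) with hN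
  have hbN : b ∈ N := Submodule.subset_span (Or.inl rfl)
  have hzN : ∀ n, z n ∈ N := fun n => Submodule.subset_span (Or.inr ⟨n, rfl⟩)
  let bas := Module.Free.chooseBasis ℤ ↥N
  have key : ∀ i, bas.repr ⟨b, hbN⟩ i = 0 := by
    intro i
    apply factorial_dvd_eq_zero
    intro n
    have hsub : (⟨b, hbN⟩ : ↥N) = ((n.factorial : ℤ)) • ⟨z n, hzN n⟩ := by
      apply Subtype.ext
      rw [Submodule.coe_smul]
      exact hz n
    rw [hsub, map_smul]
    exact ⟨bas.repr ⟨z n, hzN n⟩ i, by rw [Finsupp.smul_apply, smul_eq_mul]⟩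
  have hz0 : bas.repr ⟨b, hbN⟩ = 0 := Finsupp.ext key
  have : (⟨b, hbN⟩ : ↥N) = 0 := by
    apply bas.repr.injective
    rw [hz0, map_zero]
  exact congrArg Subtype.val this

/-- The set of possible limits along a branch. -/
def Lam (ν : ℕ → B) : Set B :=
  {b | ∀ n : ℕ, ∃ z : B, b = (∑ k ∈ Finset.range n, k.factorial • ν k) + n.factorial • z}

/-- The adversarial weights. -/
noncomputable def cc (f : B →+ ℚ) : (ℕ → B) → ℚ := fun ν =>
  if h : (Lam ν).Nonempty then f h.choose + 1 else 0

lemma lam_unique (hB : Aleph1Free B) {ν : ℕ → B} {b b' : B}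
    (hb : b ∈ Lam ν) (hb' : b' ∈ Lam ν) : b = b' := by
  have hdvd : ∀ n : ℕ, ∃ z : B, b - b' = ((n.factorial : ℤ)) • z := by
    intro n
    obtain ⟨z, hz⟩ := hb n
    obtain ⟨z', hz'⟩ := hb' n
    refine ⟨z - z', ?_⟩
    rw [natCast_zsmul, hz, hz', smul_sub]
    abel
  exact sub_eq_zero.mp (sep_of_aleph1Free hB _ hdvd)

lemma cc_eq (hB : Aleph1Free B) (f : B →+ ℚ) {ν : ℕ → B} {b : B} (hb : b ∈ Lam ν) :
    cc f ν = f b + 1 := by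
  have hne : (Lam ν).Nonempty := ⟨b, hb⟩
  rw [cc, dif_pos hne]
  congr 2
  exact lam_unique hB hne.choose_spec hb

/-- The diagonal node sequence. -/
noncomputable def diagL (ha : Gt B →+ B) : ℕ → List B
  | 0 => []
  | n+1 => diagL ha n ++ [ha (Ee (diagL ha n))]

/-- The diagonal branch. -/
noncomputable def diag (ha : Gt B →+ B) : ℕ → B := fun n => ha (Ee (diagL ha n))

lemma node_diag (ha : Gt B →+ B) (n : ℕ) : node (diag ha) n = diagL ha n := by
  induction n with
  | zero => exact node_zero _
  | succ n ih => rw [node_succ, ih]; rfl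

/-- The main contradiction. -/
lemma main_contra (hB : Aleph1Free B) (f : B →+ ℚ) (h : Gt B →+ B)
    (hfh : ∀ x : Gt B, f (h x) = gHom (cc f) x) : False := by
  set ν := diag h with hν
  have hmem : h (Ye ν 0) ∈ Lam ν := by
    intro n
    refine ⟨h (Ye ν n), ?_⟩
    have htel := congrArg h (Ye_telescope0 ν n)
    rw [map_add, map_sum, map_nsmul] at htel
    have hterm : ∀ j ∈ Finset.range n, h (j.factorial • Ee (node ν j)) = j.factorial • ν j := by
      intro j _
      rw [map_nsmul]
      congr 1
      rw [hν, node_diag]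
      rfl
    rwa [Finset.sum_congr rfl hterm] at htel
  have h1 : gHom (cc f) (Ye ν 0) = cc f ν := gHom_Ye _ _
  have h2 : cc f ν = f (h (Ye ν 0)) + 1 := cc_eq hB f hmem
  have h3 := hfh (Ye ν 0)
  rw [h1, h2] at h3
  have : (0 : ℚ) = 1 := by linarith
  norm_num at this

end Diagonal

section LemmaA

variable (P : Submodule ℤ (ℕ →₀ ℤ))

private def Nk (k : ℕ) : Submodule ℤ (ℕ →₀ ℤ) := P ⊓ Finsupp.supported ℤ ℤ (Set.Iio k)

private def Ik (k : ℕ) : Submodule ℤ ℤ :=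
  (Nk P (k+1)).map (Finsupp.lapply k : (ℕ →₀ ℤ) →ₗ[ℤ] ℤ)

private def sdx : Set ℕ := {k | Ik P k ≠ ⊥}

private def dk (k : ℕ) : ℤ := Submodule.IsPrincipal.generator (Ik P k)

lemma mem_Nk {k : ℕ} {x : ℕ →₀ ℤ} : x ∈ Nk P k ↔ x ∈ P ∧ ∀ j, k ≤ j → x j = 0 := by
  rw [Nk, Submodule.mem_inf, Finsupp.mem_supported']
  constructor
  · rintro ⟨h1, h2⟩
    exact ⟨h1, fun j hj => h2 j (by simp [Set.mem_Iio]; omega)⟩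
  · rintro ⟨h1, h2⟩
    exact ⟨h1, fun j hj => h2 j (by simp [Set.mem_Iio] at hj; omega)⟩

lemma dk_mem (k : ℕ) : dk P k ∈ Ik P k := Submodule.IsPrincipal.generator_mem _

lemma dk_ne_zero {k : ℕ} (hk : k ∈ sdx P) : dk P k ≠ 0 := by
  intro h0
  apply hk
  have hgen := Submodule.IsPrincipal.span_singleton_generator (Ik P k)
  rw [← hgen, show Submodule.IsPrincipal.generator (Ik P k) = dk P k from rfl, h0]
  exact Submodule.span_singleton_eq_bot.mpr rfl

/-- choice of preimage -/
private def wk (k : ℕ) : ℕ →₀ ℤ :=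
  if h : ∃ x, x ∈ Nk P (k+1) ∧ x k = dk P k then h.choose else 0

lemma wk_spec {k : ℕ} : wk P k ∈ Nk P (k+1) ∧ wk P k k = dk P k := by
  have h : ∃ x, x ∈ Nk P (k+1) ∧ x k = dk P k := by
    obtain ⟨x, hx, hxk⟩ := dk_mem P k
    exact ⟨x, hx, hxk⟩
  rw [wk, dif_pos h]
  exact ⟨h.choose_spec.1, h.choose_spec.2⟩

private def wfam : ↥(sdx P) → (ℕ →₀ ℤ) := fun i => wk P i

lemma wfam_mem_P (i : ↥(sdx P)) : wfam P i ∈ P := ((mem_Nk P).mp (wk_spec P).1).1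

lemma wfam_coord_self (i : ↥(sdx P)) : wfam P i (i : ℕ) = dk P i := (wk_spec P).2

lemma wfam_coord_zero (i : ↥(sdx P)) {j : ℕ} (hj : (i : ℕ) < j) : wfam P i j = 0 :=
  ((mem_Nk P).mp (wk_spec P).1).2 j (by omega)

lemma wfam_indep : LinearIndependent ℤ (wfam P) := by
  rw [linearIndependent_iff']
  intro t g
  induction t using Finset.strongInduction generalizing g with
  | _ t ih =>
    intro hsum i hi
    obtain ⟨im, him, hmax⟩ := Finset.exists_max_image t (fun i => (i : ℕ)) ⟨i, hi⟩
    have hgim : g im = 0 := by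
      have := congrArg (fun v : ℕ →₀ ℤ => v (im : ℕ)) hsum
      simp only [Finsupp.coe_zero, Pi.zero_apply] at this
      rw [Finsupp.finset_sum_apply] at this
      have hone : ∀ j ∈ t, j ≠ im → (g j • wfam P j) (im : ℕ) = 0 := by
        intro j hj hjne
        have hlt : (j : ℕ) < (im : ℕ) := by
          have hle := hmax j hj
          have : (j : ℕ) ≠ (im : ℕ) := fun hc => hjne (Subtype.ext hc)
          omega
        rw [Finsupp.smul_apply, wfam_coord_zero P j hlt, smul_zero]
      rw [Finset.sum_eq_single_of_mem im him hone, Finsupp.smul_apply,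
        wfam_coord_self, smul_eq_mul] at this
      exact (mul_eq_zero.mp this).resolve_right (dk_ne_zero P im.2)
    by_cases hieq : i = im
    · rw [hieq]; exact hgim
    · refine ih (t.erase im) (Finset.erase_ssubset him) g ?_ i (Finset.mem_erase.mpr ⟨hieq, hi⟩)
      have h5 := Finset.sum_erase_add t (fun j => g j • wfam P j) him
      simp only [hgim, zero_smul, add_zero] at h5
      rw [h5]
      exact hsum

lemma span_wfam (x : ℕ →₀ ℤ) (hx : x ∈ P) : x ∈ Submodule.span ℤ (Set.range (wfam P)) := by
  have key : ∀ (k : ℕ) (y : ℕ →₀ ℤ), y ∈ Nk P k → y ∈ Submodule.span ℤ (Set.range (wfam P)) := by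
    intro k
    induction k with
    | zero =>
      intro y hy
      have h0 : y = 0 := by
        ext j
        exact ((mem_Nk P).mp hy).2 j (Nat.zero_le j)
      rw [h0]; exact Submodule.zero_mem _
    | succ k ihk =>
      intro y hy
      have hyI : y k ∈ Ik P k := ⟨y, hy, rfl⟩
      by_cases hk : k ∈ sdx P
      · obtain ⟨c, hc⟩ := (Submodule.IsPrincipal.mem_iff_eq_smul_generator _).mp hyI
        set y' := y - c • wfam P ⟨k, hk⟩ with hy'
        have hy'mem : y' ∈ Nk P k := by
          rw [mem_Nk]
          constructor
          · exact Submodule.sub_mem _ (((mem_Nk P).mp hy).1)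
              (Submodule.smul_mem _ _ (wfam_mem_P P ⟨k, hk⟩))
          · intro j hj
            rcases Nat.eq_or_lt_of_le hj with hj' | hj'
            · have hc' : y k = c * dk P k := by rw [hc, smul_eq_mul]; rfl
              rw [Finsupp.sub_apply, Finsupp.smul_apply, ← hj', wfam_coord_self, smul_eq_mul, hc']
              simp
            · rw [Finsupp.sub_apply, Finsupp.smul_apply,
                wfam_coord_zero P ⟨k, hk⟩ hj', smul_zero,
                ((mem_Nk P).mp hy).2 j (by omega), sub_zero]
        have := ihk y' hy'mem
        have hyy : y = y' + c • wfam P ⟨k, hk⟩ := by rw [hy']; abel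
        rw [hyy]
        exact Submodule.add_mem _ this
          (Submodule.smul_mem _ _ (Submodule.subset_span ⟨⟨k, hk⟩, rfl⟩))
      · have hbot : Ik P k = ⊥ := by
          by_contra hc
          exact hk hc
        have hyk : y k = 0 := by
          rw [hbot] at hyI
          exact hyI
        apply ihk
        rw [mem_Nk]
        refine ⟨((mem_Nk P).mp hy).1, fun j hj => ?_⟩
        rcases Nat.eq_or_lt_of_le hj with hj' | hj'
        · rw [← hj']; exact hyk
        · exact ((mem_Nk P).mp hy).2 j (by omega)
  have hb : x ∈ Nk P (x.support.sup id + 1) := by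
    rw [mem_Nk]
    refine ⟨hx, fun j hj => ?_⟩
    rw [← Finsupp.notMem_support_iff]
    intro hmem
    have := Finset.le_sup (f := id) hmem
    simp only [id] at this
    omega
  exact key _ x hb

/-- Any submodule of `ℕ →₀ ℤ` is free. -/
theorem free_submodule_finsupp (P : Submodule ℤ (ℕ →₀ ℤ)) : Module.Free ℤ ↥P := by
  let w' : ↥(sdx P) → ↥P := fun i => ⟨wfam P i, wfam_mem_P P i⟩
  have hindep' : LinearIndependent ℤ w' :=
    LinearIndependent.of_comp P.subtype (by exact wfam_indep P)
  have hspan : ⊤ ≤ Submodule.span ℤ (Set.range w') := by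
    rintro ⟨x, hx⟩ -
    have hxs := span_wfam P x hx
    have hmap : Submodule.map P.subtype (Submodule.span ℤ (Set.range w'))
        = Submodule.span ℤ (Set.range (wfam P)) := by
      rw [Submodule.map_span]
      congr 1
      rw [← Set.range_comp]
      rfl
    rw [← hmap] at hxs
    obtain ⟨y, hy, hyx⟩ := hxs
    have : y = ⟨x, hx⟩ := Subtype.ext hyx
    rwa [← this]
  exact Module.Free.of_basis (Module.Basis.mk hindep' hspan)

end LemmaA

section TreeBasis

set_option linter.unusedSectionVars false

variable {B : Type} [AddCommGroup B]
variable (R : Set (ℕ → B)) (enc : ↥R → ℕ) (henc : Function.Injective enc)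

/-- splitting bound of two branches -/
def dd (ν μ : ↥R) : ℕ :=
  if h : ∃ n, (ν : ℕ → B) n ≠ (μ : ℕ → B) n then Nat.find h + 1 else 0

lemma dd_spec {ν μ : ↥R} (h : ν ≠ μ) {k : ℕ} (hk : dd R ν μ ≤ k) :
    node (ν : ℕ → B) k ≠ node (μ : ℕ → B) k := by
  have hex : ∃ n, (ν : ℕ → B) n ≠ (μ : ℕ → B) n := by
    by_contra hc
    push_neg at hc
    exact h (Subtype.ext (funext hc))
  rw [dd, dif_pos hex] at hk
  intro hnode
  exact (Nat.find_spec hex) (node_inj_iff.mp hnode _ (by omega))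

/-- the finite set of earlier branches -/
def earlier (ν : ↥R) : Finset ↥R :=
  Set.Finite.toFinset (Set.Finite.preimage (Set.injOn_of_injective henc)
    (Set.finite_Iio (enc ν)))

/-- the freshness bound for a branch -/
def mB (ν : ↥R) : ℕ := 1 + (earlier R enc henc ν).sup (fun μ => dd R ν μ)

lemma fresh_disjoint {ν μ : ↥R} (h : ν ≠ μ) {k j : ℕ}
    (hk : mB R enc henc ν ≤ k) (hj : mB R enc henc μ ≤ j) :
    node (ν : ℕ → B) k ≠ node (μ : ℕ → B) j := by
  intro hnode
  have hkj : k = j := by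
    have := congrArg List.length hnode
    simpa using this
  subst hkj
  rcases Nat.lt_or_ge (enc μ) (enc ν) with hlt | hge
  · have hmem : μ ∈ earlier R enc henc ν := by
      rw [earlier, Set.Finite.mem_toFinset]
      exact hlt
    have hdd : dd R ν μ ≤ (earlier R enc henc ν).sup (fun μ => dd R ν μ) :=
      Finset.le_sup hmem
    exact dd_spec R h (by rw [mB] at hk; omega) hnode
  · have hlt : enc ν < enc μ := by
      rcases Nat.eq_or_lt_of_le hge with he | hl
      · exact absurd (henc he) h
      · exact hl
    have hmem : ν ∈ earlier R enc henc μ := by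
      rw [earlier, Set.Finite.mem_toFinset]
      exact hlt
    have hdd : dd R μ ν ≤ (earlier R enc henc μ).sup (fun ν' => dd R μ ν') :=
      Finset.le_sup hmem
    exact (dd_spec R (Ne.symm h) (by rw [mB] at hj; omega) hnode.symm)

/-- nodes in the fresh region of some branch -/
def Fresh : Set (List B) :=
  ⋃ (ν : ↥R), {t | ∃ k, mB R enc henc ν ≤ k ∧ t = node (ν : ℕ → B) k}

/-- basis nodes -/
def EB : Set (List B) :=
  (⋃ (ν : ↥R), {t | ∃ k, k < mB R enc henc ν ∧ t = node (ν : ℕ → B) k}) \ Fresh R enc henc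

/-- index of the basis family -/
def Idx : Type := {p : ↥R × ℕ // mB R enc henc p.1 ≤ p.2} ⊕ ↥(EB R enc henc)

/-- the basis family of the subtree module -/
def fam : Idx R enc henc → MM B :=
  Sum.elim (fun p => yy (p.1.1 : ℕ → B) p.1.2) (fun t => ee (t : List B))

lemma node_mem_Fresh {ν : ↥R} {k : ℕ} (hk : mB R enc henc ν ≤ k) :
    node (ν : ℕ → B) k ∈ Fresh R enc henc := by
  rw [Fresh]
  exact Set.mem_iUnion.mpr ⟨ν, k, hk, rfl⟩

lemma famE_at_fresh (ν : ↥R) {n : ℕ} (hn : mB R enc henc ν ≤ n) (t : ↥(EB R enc henc)) :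
    ee (t : List B) (node (ν : ℕ → B) n) = 0 := by
  rw [ee, if_neg]
  intro h
  exact (t.2.2 (h ▸ node_mem_Fresh R enc henc hn))

lemma famY_at_fresh (ν : ↥R) {n : ℕ} (hn : mB R enc henc ν ≤ n)
    (p : {p : ↥R × ℕ // mB R enc henc p.1 ≤ p.2}) :
    yy (p.1.1 : ℕ → B) p.1.2 (node (ν : ℕ → B) n) =
      if p.1.1 = ν ∧ p.1.2 ≤ n then (r p.1.2 n : ℤ) else 0 := by
  by_cases hμ : p.1.1 = ν
  · rw [hμ, yy_at_node]
    by_cases hle : p.1.2 ≤ n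
    · rw [if_pos hle, if_pos ⟨rfl, hle⟩]
    · rw [if_neg hle, if_neg (fun hc => hle hc.2)]
  · rw [if_neg (fun hc => hμ hc.1)]
    rw [yy, if_neg]
    rintro ⟨h1, h2⟩
    rw [node_length] at h1 h2
    exact fresh_disjoint R enc henc (fun he => hμ he.symm) hn (le_trans p.2 h2) h1

lemma fam_indep : LinearIndependent ℤ (fam R enc henc) := by
  rw [linearIndependent_iff']
  intro t g hsum
  have hcoord : ∀ s : List B, (∑ i ∈ t, g i * fam R enc henc i s) = 0 := by
    intro s
    have h1 : (∑ i ∈ t, g i • fam R enc henc i) s = 0 := by rw [hsum]; rfl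
    rw [Finset.sum_apply] at h1
    simpa using h1
  have hA : ∀ (n : ℕ) (ν : ↥R) (hn : mB R enc henc ν ≤ n),
      Sum.inl ⟨(ν, n), hn⟩ ∈ t → g (Sum.inl ⟨(ν, n), hn⟩) = 0 := by
    intro n
    induction n using Nat.strong_induction_on with
    | _ n ihn =>
      intro ν hn hmem
      have hc := hcoord (node (ν : ℕ → B) n)
      have hothers : ∀ j ∈ t, j ≠ Sum.inl ⟨(ν, n), hn⟩ →
          g j * fam R enc henc j (node (ν : ℕ → B) n) = 0 := by
        intro j hj hjne
        match j with
        | Sum.inr tE =>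
          rw [show fam R enc henc (Sum.inr tE) = ee (tE : List B) from rfl,
            famE_at_fresh R enc henc ν hn tE, mul_zero]
        | Sum.inl q =>
          rw [show fam R enc henc (Sum.inl q) = yy (q.1.1 : ℕ → B) q.1.2 from rfl,
            famY_at_fresh R enc henc ν hn q]
          by_cases hcond : q.1.1 = ν ∧ q.1.2 ≤ n
          · have hne : q.1.2 ≠ n := by
              intro he
              apply hjne
              congr 1
              apply Subtype.ext
              exact Prod.ext hcond.1 he
            have hlt : q.1.2 < n := lt_of_le_of_ne hcond.2 hne
            have hg0 : g (Sum.inl q) = 0 := by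
              have := ihn q.1.2 hlt q.1.1 q.2 (by exact hj)
              exact this
            rw [hg0, zero_mul]
          · rw [if_neg hcond, mul_zero]
      have hsingle := Finset.sum_eq_single_of_mem (f := fun j => g j * fam R enc henc j (node (ν : ℕ → B) n)) (Sum.inl ⟨(ν, n), hn⟩) hmem hothers
      have hc2 : g (Sum.inl ⟨(ν, n), hn⟩) *
          fam R enc henc (Sum.inl ⟨(ν, n), hn⟩) (node (ν : ℕ → B) n) = 0 :=
        hsingle.symm.trans hc
      have hval : fam R enc henc (Sum.inl ⟨(ν, n), hn⟩) (node (ν : ℕ → B) n)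
          = (1 : ℤ) := by
        show yy (ν : ℕ → B) n (node (ν : ℕ → B) n) = 1
        rw [yy_at_node, if_pos (le_refl n), r_self]
        rfl
      rw [hval, mul_one] at hc2
      exact hc2
  have hB : ∀ (tE : ↥(EB R enc henc)), Sum.inr tE ∈ t → g (Sum.inr tE) = 0 := by
    intro tE hmem
    have hc := hcoord (tE : List B)
    have hothers : ∀ j ∈ t, j ≠ Sum.inr tE →
        g j * fam R enc henc j (tE : List B) = 0 := by
      intro j hj hjne
      match j with
      | Sum.inl q =>
        rw [hA q.1.2 q.1.1 q.2 (by exact hj), zero_mul]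
      | Sum.inr tE' =>
        have hne : (tE : List B) ≠ (tE' : List B) := by
          intro he
          exact hjne (by congr 1; exact Subtype.ext he.symm)
        rw [show fam R enc henc (Sum.inr tE') = ee (tE' : List B) from rfl,
          ee, if_neg hne, mul_zero]
    have hsingle := Finset.sum_eq_single_of_mem (f := fun j => g j * fam R enc henc j (tE : List B)) (Sum.inr tE) hmem hothers
    have hc2 : g (Sum.inr tE) * fam R enc henc (Sum.inr tE) (tE : List B) = 0 :=
      hsingle.symm.trans hc
    have hval : fam R enc henc (Sum.inr tE) (tE : List B) = 1 := by
      show ee (tE : List B) (tE : List B) = 1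
      rw [ee, if_pos rfl]
    rw [hval, mul_one] at hc2
    exact hc2
  intro i hi
  match i with
  | Sum.inl p => exact hA p.1.2 p.1.1 p.2 (by exact hi)
  | Sum.inr tE => exact hB tE (by exact hi)

lemma ee_node_mem_span (μ : ↥R) (k : ℕ) :
    ee (node (μ : ℕ → B) k) ∈ Submodule.span ℤ (Set.range (fam R enc henc)) := by
  by_cases hf : node (μ : ℕ → B) k ∈ Fresh R enc henc
  · obtain ⟨ν, hν⟩ := Set.mem_iUnion.mp hf
    obtain ⟨k', hk', heq⟩ := hν
    rw [heq]
    have he : ee (node (ν : ℕ → B) k')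
        = yy (ν : ℕ → B) k' - (k'+1) • yy (ν : ℕ → B) (k'+1) := by
      rw [yy_rel (ν : ℕ → B) k']
      abel
    rw [he]
    refine Submodule.sub_mem _ ?_ ?_
    · exact Submodule.subset_span ⟨Sum.inl ⟨(ν, k'), hk'⟩, rfl⟩
    · rw [← natCast_zsmul]
      exact Submodule.smul_mem _ _
        (Submodule.subset_span ⟨Sum.inl ⟨(ν, k'+1), le_trans hk' (Nat.le_succ k')⟩, rfl⟩)
  · have hlow : node (μ : ℕ → B) k ∈ EB R enc henc := by
      refine ⟨Set.mem_iUnion.mpr ⟨μ, k, ?_, rfl⟩, hf⟩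
      by_contra hge
      push_neg at hge
      exact hf (node_mem_Fresh R enc henc hge)
    exact Submodule.subset_span ⟨Sum.inr ⟨_, hlow⟩, rfl⟩

lemma yy_mem_span (ν : ↥R) (n : ℕ) :
    yy (ν : ℕ → B) n ∈ Submodule.span ℤ (Set.range (fam R enc henc)) := by
  by_cases hn : mB R enc henc ν ≤ n
  · exact Submodule.subset_span ⟨Sum.inl ⟨(ν, n), hn⟩, rfl⟩
  · push_neg at hn
    rw [yy_telescope (ν : ℕ → B) n (mB R enc henc ν) (le_of_lt hn)]
    refine Submodule.add_mem _ ?_ ?_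
    · refine Submodule.sum_mem _ (fun j hj => ?_)
      rw [← natCast_zsmul]
      exact Submodule.smul_mem _ _ (ee_node_mem_span R enc henc ν j)
    · rw [← natCast_zsmul]
      exact Submodule.smul_mem _ _
        (Submodule.subset_span ⟨Sum.inl ⟨(ν, mB R enc henc ν), le_refl _⟩, rfl⟩)

lemma countable_Idx (hR : R.Countable) : Countable (Idx R enc henc) := by
  haveI := hR.to_subtype
  haveI h1 : Countable {p : ↥R × ℕ // mB R enc henc p.1 ≤ p.2} := Subtype.countable
  haveI h2 : Countable ↥(EB R enc henc) := by
    apply Set.Countable.to_subtype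
    apply Set.Countable.mono (Set.diff_subset)
    apply Set.countable_iUnion
    intro ν
    apply Set.Countable.mono ?_ (Set.countable_range (node (ν : ℕ → B)))
    rintro x ⟨k, -, rfl⟩
    exact ⟨k, rfl⟩
  exact instCountableSum

end TreeBasis

section Aleph1FreeGt

set_option linter.unusedSectionVars false

variable {B : Type} [AddCommGroup B]

/-- the inclusion as a linear map -/
def jlin (B : Type) [AddCommGroup B] : Gt B →ₗ[ℤ] MM B := addHomToLin (toAmb B)

lemma jlin_inj : Function.Injective (jlin B) := toAmb_injective

theorem aleph1Free_Gt : Aleph1Free (Gt B) := by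
  intro N hN
  obtain ⟨S, hSc, hSspan⟩ := hN
  have hexists : ∀ y ∈ (⇑(jlin B) '' S), ∃ c : ((ℕ → B) × ℕ) →₀ ℤ,
      (c.sum fun i a => a • Yf B i) = y := by
    rintro y ⟨x, hxS, rfl⟩
    exact Finsupp.mem_span_range_iff_exists_finsupp.mp (toAmb_mem x)
  choose cf hcf using hexists
  have hSc' : (⇑(jlin B) '' S).Countable := hSc.image _
  haveI hctS : Countable ↥(⇑(jlin B) '' S) := hSc'.to_subtype
  set R : Set (ℕ → B) :=
    ⋃ (y : ↥(⇑(jlin B) '' S)), ((cf y y.2).support.image Prod.fst : Set (ℕ → B)) with hRdef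
  have hRc : R.Countable := Set.countable_iUnion (fun y => (Finset.countable_toSet _))
  haveI := hRc.to_subtype
  obtain ⟨enc, henc⟩ := exists_injective_nat ↥R
  have hPle : N.map (jlin B) ≤ Submodule.span ℤ (Set.range (fam R enc henc)) := by
    have hspan : N.map (jlin B) = Submodule.span ℤ (⇑(jlin B) '' S) := by
      rw [← hSspan, Submodule.map_span]
    rw [hspan, Submodule.span_le]
    rintro y hy
    rw [← hcf y hy]
    apply Submodule.finsuppSum_mem
    intro p hp
    have hpR : p.1 ∈ R := by
      rw [hRdef]
      refine Set.mem_iUnion.mpr ⟨⟨y, hy⟩, ?_⟩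
      simp only [Finset.coe_image, Set.mem_image, Finset.mem_coe]
      exact ⟨p, Finsupp.mem_support_iff.mpr hp, rfl⟩
    exact Submodule.smul_mem _ _ (yy_mem_span R enc henc ⟨p.1, hpR⟩ p.2)
  haveI hIc : Countable (Idx R enc henc) := countable_Idx R enc henc hRc
  obtain ⟨eI, heI⟩ := exists_injective_nat (Idx R enc henc)
  set bas := Module.Basis.span (fam_indep R enc henc) with hbas
  set ρ : ↥(N.map (jlin B)) →ₗ[ℤ] (ℕ →₀ ℤ) :=
    (Finsupp.lmapDomain ℤ ℤ eI).comp
      ((bas.repr.toLinearMap).comp (Submodule.inclusion hPle)) with hρdef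
  have hmapinj : Function.Injective ⇑(Finsupp.lmapDomain ℤ ℤ eI) := by
    intro a b hab
    apply Finsupp.mapDomain_injective heI
    rwa [← Finsupp.lmapDomain_apply ℤ ℤ eI a, ← Finsupp.lmapDomain_apply ℤ ℤ eI b]
  have hρ : Function.Injective ⇑ρ := by
    rw [hρdef, LinearMap.coe_comp, LinearMap.coe_comp]
    exact hmapinj.comp ((EquivLike.injective bas.repr).comp
      (Submodule.inclusion_injective hPle))
  haveI := free_submodule_finsupp (LinearMap.range ρ)
  exact Module.Free.of_equiv
    ((Submodule.equivMapOfInjective (jlin B) jlin_inj N).trans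
      (LinearEquiv.ofInjective ρ hρ)).symm

end Aleph1FreeGt

end A1F
end A1FSetup


/-- The class of `ℵ₁`-free (= flat Mittag-Leffler) abelian groups is not precovering:
`ℚ` admits no precover by this class. -/
theorem aleph1Free_not_precovering :
    ¬ ∃ (B : Type) (_ : AddCommGroup B) (f : B →ₗ[ℤ] ℚ), Aleph1Free B ∧
      ∀ (G : Type) (_ : AddCommGroup G), Aleph1Free G →
        ∀ g : G →ₗ[ℤ] ℚ, ∃ h : G →ₗ[ℤ] B, f ∘ₗ h = g := by
  rintro ⟨B, instB, f, hBfree, hpre⟩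
  obtain ⟨h, hfh⟩ := hpre (A1F.Gt B) inferInstance A1F.aleph1Free_Gt
    (A1F.gHom (A1F.cc f.toAddMonoidHom)).toIntLinearMap
  apply A1F.main_contra hBfree f.toAddMonoidHom h.toAddMonoidHom
  intro x
  exact LinearMap.congr_fun hfh x
end
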